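/- arXiv:2409.13353 — 4 statements merged into one kernel-verified Lean document; each statement's English description precedes it below -/
import Mathlib

section
/- Let n ≥ 1, μ ∈ (0,2), and let u be a classical compactly supported solution of the linear damped wave equation ∂_t²u − Δu + (μ/(1+t))∂_t u = 0 on [0,∞) × ℝⁿ. Define E₀(t) := (1/2)∫_{ℝⁿ}( |∇_x u(t,x)|² + (∂_t u(t,x))² ) dx, E₁(t) := ∫_{ℝⁿ}( u ∂_t u + u²/(2(1+t)) ) dx, and E₂(t) := E₀(t) + (μ/(2(1+t))) E₁(t). Then E₂ is differentiable on (0,∞) and satisfies, for all t > 0: d/dt E₂(t) + (μ/(1+t)) E₂(t) + (μ(2−μ)/(4(1+t)³)) ∫_{ℝⁿ} u(t,x)² dx = 0. -/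
open MeasureTheory Real Set

noncomputable section

/-- First time derivative `∂ₜu`. -/
def tderiv {n : ℕ} (u : ℝ → (Fin n → ℝ) → ℝ) (t : ℝ) (x : Fin n → ℝ) : ℝ :=
  deriv (fun τ => u τ x) t

/-- Second time derivative `∂ₜ²u`. -/
def tderiv2 {n : ℕ} (u : ℝ → (Fin n → ℝ) → ℝ) (t : ℝ) (x : Fin n → ℝ) : ℝ :=
  deriv (fun τ => tderiv u τ x) t

/-- `i`-th spatial partial derivative `∂ᵢ g`. -/
def pd {n : ℕ} (i : Fin n) (g : (Fin n → ℝ) → ℝ) : (Fin n → ℝ) → ℝ :=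
  fun x => fderiv ℝ g x (Pi.single i 1)

/-- Squared Euclidean norm of the spatial gradient, `|∇g(x)|²`. -/
def gradSq {n : ℕ} (g : (Fin n → ℝ) → ℝ) (x : Fin n → ℝ) : ℝ :=
  ∑ i, (pd i g x) ^ 2

/-- Spatial Laplacian `Δg(x)`. -/
def lap {n : ℕ} (g : (Fin n → ℝ) → ℝ) (x : Fin n → ℝ) : ℝ :=
  ∑ i, pd i (pd i g) x

/-- A classical compactly supported solution of
`∂ₜ²u − Δu + (μ/(1+t)) ∂ₜu = 0` on `[0,∞) × ℝⁿ`:  `u` is `C²` on `[0,∞) × ℝⁿ`,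
satisfies the equation pointwise for `t ≥ 0`, and for every `T > 0` vanishes outside
a compact spatial set for all `t ∈ [0,T]`. -/
def IsSol (n : ℕ) (μ : ℝ) (u : ℝ → (Fin n → ℝ) → ℝ) : Prop :=
  ContDiffOn ℝ 2 (fun q : ℝ × (Fin n → ℝ) => u q.1 q.2) (Set.Ici (0:ℝ) ×ˢ Set.univ) ∧
  (∀ t, 0 ≤ t → ∀ x, tderiv2 u t x - lap (u t) x + (μ / (1 + t)) * tderiv u t x = 0) ∧
  (∀ T, 0 < T → ∃ K : Set (Fin n → ℝ), IsCompact K ∧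
    ∀ t ∈ Set.Icc (0:ℝ) T, ∀ x, x ∉ K → u t x = 0)

/-- The energy `E₀(t) = (1/2)∫ (|∇u|² + (∂ₜu)²) dx`. -/
def E0 {n : ℕ} (u : ℝ → (Fin n → ℝ) → ℝ) (t : ℝ) : ℝ :=
  (1 / 2) * ∫ x, (gradSq (u t) x + (tderiv u t x) ^ 2)

/-- The functional `E₁(t) = ∫ ( u ∂ₜu + u²/(2(1+t)) ) dx`. -/
def E1 {n : ℕ} (u : ℝ → (Fin n → ℝ) → ℝ) (t : ℝ) : ℝ :=
  ∫ x, (u t x * tderiv u t x + (u t x) ^ 2 / (2 * (1 + t)))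

/-- `E₂(t) = E₀(t) + (μ/(2(1+t))) E₁(t)`. -/
def E2 {n : ℕ} (μ : ℝ) (u : ℝ → (Fin n → ℝ) → ℝ) (t : ℝ) : ℝ :=
  E0 u t + (μ / (2 * (1 + t))) * E1 u t

/-! ### Auxiliary lemmas -/

lemma key_div {n : ℕ} (g : (Fin (n+1) → ℝ) → ℝ) (hg : ContDiff ℝ 1 g)
    (hsupp : HasCompactSupport g) (i : Fin (n+1)) :
    ∫ x, fderiv ℝ g x (Pi.single i 1) = 0 := by
  obtain ⟨R, hR0, hRsub⟩ : ∃ R > 0, tsupport g ⊆ Metric.ball 0 R :=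
    hsupp.isBounded.subset_ball_lt 0 0
  set a : Fin (n+1) → ℝ := fun _ => -R with ha
  set b : Fin (n+1) → ℝ := fun _ => R with hb
  have hle : a ≤ b := fun j => by simp only [ha, hb]; linarith
  have hball : Metric.ball (0 : Fin (n+1) → ℝ) R ⊆ Icc a b := by
    intro x hx
    rw [Metric.mem_ball, dist_zero_right, pi_norm_lt_iff hR0] at hx
    refine ⟨fun j => ?_, fun j => ?_⟩ <;>
      · have := abs_lt.1 (hx j); simp only [ha, hb]; linarith [this.1, this.2]
  have hout : ∀ x ∉ Metric.ball (0 : Fin (n+1) → ℝ) R, fderiv ℝ g x = 0 := by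
    intro x hx
    have : x ∉ tsupport g := fun h => hx (hRsub h)
    exact Function.notMem_support.mp (fun h => this (support_fderiv_subset ℝ h))
  have hcont : Continuous fun x => fderiv ℝ g x (Pi.single i 1) :=
    (hg.continuous_fderiv one_ne_zero).clm_apply continuous_const
  have h1 : ∀ x : Fin (n+1) → ℝ, (∑ j, (ContinuousLinearMap.pi
      (fun j => if j = i then fderiv ℝ g x else 0)) (Pi.single j 1) j)
      = fderiv ℝ g x (Pi.single i 1) := by
    intro x
    simp only [ContinuousLinearMap.pi_apply]
    rw [Finset.sum_eq_single i]
    · simp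
    · intro j _ hj; simp [hj]
    · simp
  have hfun : (fun x : Fin (n+1) → ℝ => ∑ j, (ContinuousLinearMap.pi
      (fun j => if j = i then fderiv ℝ g x else 0)) (Pi.single j 1) j)
      = fun x => fderiv ℝ g x (Pi.single i 1) := funext h1
  have HC : ContinuousOn (fun x => Pi.single (M := fun _ => ℝ) i (g x)) (Icc a b) := by
    refine (continuous_pi fun j => ?_).continuousOn
    rcases eq_or_ne j i with rfl | hji
    · simpa using hg.continuous
    · simpa [Pi.single_eq_of_ne hji] using (continuous_const (y := (0:ℝ)))
  have HD : ∀ x ∈ (univ.pi fun j => Ioo (a j) (b j)) \ (∅ : Set (Fin (n+1) → ℝ)),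
      HasFDerivAt (fun x => Pi.single (M := fun _ => ℝ) i (g x))
        (ContinuousLinearMap.pi (fun j => if j = i then fderiv ℝ g x else 0)) x := by
    intro x _
    have : ∀ j, HasFDerivAt (fun x : Fin (n+1) → ℝ => Pi.single (M := fun _ => ℝ) i (g x) j)
        (if j = i then fderiv ℝ g x else 0) x := by
      intro j
      rcases eq_or_ne j i with rfl | hji
      · simpa using (hg.differentiable one_ne_zero x).hasFDerivAt
      · have he : (fun x : Fin (n+1) → ℝ => Pi.single (M := fun _ => ℝ) i (g x) j)
            = fun _ => (0:ℝ) := funext fun x => Pi.single_eq_of_ne hji _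
        rw [if_neg hji, he]
        exact hasFDerivAt_const (0:ℝ) x
    exact hasFDerivAt_pi.2 this
  have HI : IntegrableOn (fun x : Fin (n+1) → ℝ => ∑ j, (ContinuousLinearMap.pi
      (fun j => if j = i then fderiv ℝ g x else 0)) (Pi.single j 1) j) (Icc a b) := by
    rw [hfun]
    exact hcont.continuousOn.integrableOn_compact isCompact_Icc
  have key := integral_divergence_of_hasFDerivAt_off_countable a b hle
    (fun x => Pi.single i (g x))
    (fun x => ContinuousLinearMap.pi (fun j => if j = i then fderiv ℝ g x else 0))
    ∅ countable_empty HC HD HI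
  have e1 : ∫ x, fderiv ℝ g x (Pi.single i 1)
      = ∫ x in Icc a b, fderiv ℝ g x (Pi.single i 1) :=
    (setIntegral_eq_integral_of_forall_compl_eq_zero (fun x hx => by
      have : x ∉ Metric.ball (0 : Fin (n+1) → ℝ) R := fun h => hx (hball h)
      rw [hout x this]; rfl)).symm
  rw [e1, ← hfun, key]
  refine Finset.sum_eq_zero fun j _ => ?_
  have hface : ∀ (c : ℝ), |c| = R →
      ∀ x : Fin n → ℝ, Pi.single (M := fun _ => ℝ) i
        (g (Fin.insertNth (α := fun _ : Fin (n+1) => ℝ) j c x)) j = 0 := by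
    intro c hc x
    rcases eq_or_ne j i with rfl | hji
    · have : g (Fin.insertNth (α := fun _ : Fin (n+1) => ℝ) j c x) = 0 := by
        apply image_eq_zero_of_notMem_tsupport
        intro hmem
        have hm := hRsub hmem
        rw [Metric.mem_ball, dist_zero_right] at hm
        have hle' : |c| ≤ ‖Fin.insertNth (α := fun _ : Fin (n+1) => ℝ) j c x‖ := by
          have := norm_le_pi_norm (Fin.insertNth (α := fun _ : Fin (n+1) => ℝ) j c x) j
          simpa using this
        rw [hc] at hle'; linarith
      simp [this]
    · simp [Pi.single_eq_of_ne hji]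
  rw [sub_eq_zero]
  have hbj : |b j| = R := by simp [hb, abs_of_pos hR0]
  have haj : |a j| = R := by
    simp only [ha, abs_neg]; exact abs_of_pos hR0
  rw [integral_congr_ae (Filter.Eventually.of_forall fun x => hface (b j) hbj x),
      integral_congr_ae (Filter.Eventually.of_forall fun x => hface (a j) haj x)]
lemma integral_pd_eq_zero {n : ℕ} (g : (Fin n → ℝ) → ℝ) (hg : ContDiff ℝ 1 g)
    (hsupp : HasCompactSupport g) (i : Fin n) :
    ∫ x, fderiv ℝ g x (Pi.single i 1) = 0 := by
  cases n with
  | zero => exact i.elim0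
  | succ m => exact key_div g hg hsupp i

lemma ibp_mul {n : ℕ} (F G : (Fin n → ℝ) → ℝ) (hF : ContDiff ℝ 1 F) (hG : ContDiff ℝ 1 G)
    (hsF : HasCompactSupport F) (i : Fin n) :
    ∫ x, fderiv ℝ F x (Pi.single i 1) * G x = - ∫ x, F x * fderiv ℝ G x (Pi.single i 1) := by
  have hFG : ContDiff ℝ 1 (fun x => F x * G x) := hF.mul hG
  have hs : HasCompactSupport (fun x => F x * G x) := hsF.mul_right
  have h0 := integral_pd_eq_zero _ hFG hs i
  have hd : ∀ x, fderiv ℝ (fun y => F y * G y) x (Pi.single i 1)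
      = fderiv ℝ F x (Pi.single i 1) * G x + F x * fderiv ℝ G x (Pi.single i 1) := by
    intro x
    rw [fderiv_fun_mul (hF.differentiable one_ne_zero x) (hG.differentiable one_ne_zero x)]
    simp [ContinuousLinearMap.add_apply, ContinuousLinearMap.smul_apply, smul_eq_mul]
    ring
  rw [integral_congr_ae (Filter.Eventually.of_forall hd)] at h0
  have hA : Integrable (fun x => fderiv ℝ F x (Pi.single i 1) * G x) := by
    apply Continuous.integrable_of_hasCompactSupport
    · exact ((hF.continuous_fderiv one_ne_zero).clm_apply continuous_const).mul hG.continuous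
    · exact (hsF.fderiv_apply ℝ (Pi.single i 1)).mul_right
  have hB : Integrable (fun x => F x * fderiv ℝ G x (Pi.single i 1)) := by
    apply Continuous.integrable_of_hasCompactSupport
    · exact hF.continuous.mul ((hG.continuous_fderiv one_ne_zero).clm_apply continuous_const)
    · exact hsF.mul_right
  rw [integral_add hA hB] at h0
  linarith
lemma hasDerivAt_integral_local {n : ℕ} {G G' : ℝ × (Fin n → ℝ) → ℝ} {t ε : ℝ}
    {K : Set (Fin n → ℝ)} (hKc : IsCompact K) (hε : 0 < ε)
    (hGcont : ∀ τ ∈ Metric.ball t ε, Continuous (fun y => G (τ, y)))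
    (hGzero : ∀ x ∉ K, G (t, x) = 0)
    (hG'cont : ContinuousOn G' (Metric.closedBall t ε ×ˢ (univ : Set (Fin n → ℝ))))
    (hG'zero : ∀ τ ∈ Metric.closedBall t ε, ∀ x ∉ K, G' (τ, x) = 0)
    (hdiff : ∀ x : Fin n → ℝ, ∀ τ ∈ Metric.ball t ε, HasDerivAt (fun τ' => G (τ', x)) (G' (τ, x)) τ) :
    HasDerivAt (fun τ => ∫ x, G (τ, x)) (∫ x, G' (t, x)) t := by
  have htmem : t ∈ Metric.closedBall t ε := Metric.mem_closedBall_self hε.le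
  -- bound
  obtain ⟨C, hC⟩ : ∃ C, ∀ q ∈ (Metric.closedBall t ε ×ˢ K), ‖G' q‖ ≤ C :=
    ((isCompact_closedBall t ε).prod hKc).exists_bound_of_continuousOn
      (hG'cont.mono (prod_mono_right (subset_univ K)))
  set bound : (Fin n → ℝ) → ℝ := K.indicator (fun _ => C) with hbound
  have hboundInt : Integrable bound := by
    rw [hbound, integrable_indicator_iff hKc.measurableSet]
    exact integrableOn_const hKc.measure_lt_top.ne
  have h_bound : ∀ᵐ x : Fin n → ℝ, ∀ τ ∈ Metric.ball t ε, ‖G' (τ, x)‖ ≤ bound x := by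
    refine Filter.Eventually.of_forall fun x τ hτ => ?_
    by_cases hx : x ∈ K
    · rw [hbound, indicator_of_mem hx]
      exact hC (τ, x) ⟨Metric.ball_subset_closedBall hτ, hx⟩
    · rw [hbound, indicator_of_notMem hx, hG'zero τ (Metric.ball_subset_closedBall hτ) x hx]
      simp
  have hF'slice : Continuous fun x => G' (t, x) := by
    rw [← continuousOn_univ]
    exact hG'cont.comp (Continuous.continuousOn (by fun_prop))
      (fun x _ => ⟨htmem, mem_univ x⟩)
  have hres := hasDerivAt_integral_of_dominated_loc_of_deriv_le (Metric.ball_mem_nhds t hε)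
    (F := fun τ x => G (τ, x)) (F' := fun τ x => G' (τ, x)) (bound := bound)
    (Filter.eventually_iff_exists_mem.2 ⟨Metric.ball t ε, Metric.ball_mem_nhds t hε,
      fun τ hτ => (hGcont τ hτ).aestronglyMeasurable⟩)
    ((hGcont t (Metric.mem_ball_self hε)).integrable_of_hasCompactSupport
      (HasCompactSupport.intro hKc hGzero))
    hF'slice.aestronglyMeasurable h_bound hboundInt
    (Filter.Eventually.of_forall fun x τ hτ => hdiff x τ hτ)
  exact hres.2
def Ufun {n : ℕ} (u : ℝ → (Fin n → ℝ) → ℝ) : ℝ × (Fin n → ℝ) → ℝ := fun q => u q.1 q.2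
def W1 {n : ℕ} (u : ℝ → (Fin n → ℝ) → ℝ) := fderiv ℝ (Ufun u)
def W2 {n : ℕ} (u : ℝ → (Fin n → ℝ) → ℝ) := fderiv ℝ (W1 u)

section Reg
variable {n : ℕ} {u : ℝ → (Fin n → ℝ) → ℝ}
  (hC2 : ContDiffOn ℝ 2 (Ufun u) (Set.Ici (0:ℝ) ×ˢ Set.univ))

lemma mem_nhds_of_pos {q : ℝ × (Fin n → ℝ)} (hq : 0 < q.1) :
    (Set.Ici (0:ℝ) ×ˢ (Set.univ : Set (Fin n → ℝ))) ∈ nhds q := by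
  refine Filter.mem_of_superset ((isOpen_Ioi.prod isOpen_univ).mem_nhds ⟨hq, mem_univ _⟩) ?_
  exact Set.prod_mono Ioi_subset_Ici_self subset_rfl

include hC2

lemma L1 {q : ℝ × (Fin n → ℝ)} (hq : 0 < q.1) : ContDiffAt ℝ 2 (Ufun u) q :=
  hC2.contDiffAt (mem_nhds_of_pos hq)

lemma L2 {q : ℝ × (Fin n → ℝ)} (hq : 0 < q.1) : HasFDerivAt (Ufun u) (W1 u q) q :=
  ((L1 hC2 hq).differentiableAt (by norm_num)).hasFDerivAt

lemma L3 {q : ℝ × (Fin n → ℝ)} (hq : 0 < q.1) : ContDiffAt ℝ 1 (W1 u) q :=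
  (L1 hC2 hq).fderiv_right (by norm_num)

lemma L4 {q : ℝ × (Fin n → ℝ)} (hq : 0 < q.1) : HasFDerivAt (W1 u) (W2 u q) q :=
  ((L3 hC2 hq).differentiableAt one_ne_zero).hasFDerivAt

lemma L5 {q : ℝ × (Fin n → ℝ)} (hq : 0 < q.1) : ContinuousAt (W2 u) q :=
  ((L3 hC2 hq).fderiv_right (m := 0) le_rfl).continuousAt

lemma L5' {q : ℝ × (Fin n → ℝ)} (hq : 0 < q.1) : ContinuousAt (W1 u) q :=
  (L3 hC2 hq).continuousAt

lemma L6 {q : ℝ × (Fin n → ℝ)} (hq : 0 < q.1) (v w : ℝ × (Fin n → ℝ)) :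
    W2 u q v w = W2 u q w v := by
  refine second_derivative_symmetric_of_eventually (f := Ufun u) (f' := W1 u) ?_ (L4 hC2 hq) v w
  have : ∀ᶠ p : ℝ × (Fin n → ℝ) in nhds q, 0 < p.1 :=
    (isOpen_Ioi.preimage continuous_fst).mem_nhds hq
  exact this.mono fun p hp => L2 hC2 hp

lemma S1 {t : ℝ} (ht : 0 < t) (x : Fin n → ℝ) :
    HasDerivAt (fun τ => u τ x) (W1 u (t, x) (1, 0)) t :=
  (L2 hC2 ht).comp_hasDerivAt t ((hasDerivAt_id t).prodMk (hasDerivAt_const t x))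

lemma tderiv_eq {t : ℝ} (ht : 0 < t) (x : Fin n → ℝ) :
    tderiv u t x = W1 u (t, x) (1, 0) := (S1 hC2 ht x).deriv

lemma S2 {t : ℝ} (ht : 0 < t) (x : Fin n → ℝ) :
    HasFDerivAt (u t) ((W1 u (t, x)).comp ((0 : (Fin n → ℝ) →L[ℝ] ℝ).prod
      (ContinuousLinearMap.id ℝ (Fin n → ℝ)))) x :=
  (L2 hC2 ht).comp x ((hasFDerivAt_const t x).prodMk (hasFDerivAt_id x))

lemma pd_eq {t : ℝ} (ht : 0 < t) (x : Fin n → ℝ) (i : Fin n) :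
    pd i (u t) x = W1 u (t, x) (0, Pi.single i 1) := by
  rw [pd, (S2 hC2 ht x).fderiv]; rfl

lemma S3 {t : ℝ} (ht : 0 < t) (x : Fin n → ℝ) (w : ℝ × (Fin n → ℝ)) :
    HasDerivAt (fun τ => W1 u (τ, x) w) (W2 u (t, x) (1, 0) w) t := by
  have h1 : HasDerivAt (fun τ => W1 u (τ, x)) (W2 u (t, x) (1, 0)) t :=
    (L4 hC2 ht).comp_hasDerivAt t ((hasDerivAt_id t).prodMk (hasDerivAt_const t x))
  simpa using h1.clm_apply (hasDerivAt_const t w)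

lemma S5 {t : ℝ} (ht : 0 < t) (x : Fin n → ℝ) (w : ℝ × (Fin n → ℝ)) :
    HasFDerivAt (fun y => W1 u (t, y) w)
      (((W2 u (t, x)).comp ((0 : (Fin n → ℝ) →L[ℝ] ℝ).prod
        (ContinuousLinearMap.id ℝ (Fin n → ℝ)))).flip w) x := by
  have h1 : HasFDerivAt (fun y => W1 u (t, y))
      ((W2 u (t, x)).comp ((0 : (Fin n → ℝ) →L[ℝ] ℝ).prod
        (ContinuousLinearMap.id ℝ (Fin n → ℝ)))) x :=
    (L4 hC2 ht).comp x ((hasFDerivAt_const t x).prodMk (hasFDerivAt_id x))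
  simpa using h1.clm_apply (hasFDerivAt_const w x)

lemma pd_W1_eq {t : ℝ} (ht : 0 < t) (x : Fin n → ℝ) (w : ℝ × (Fin n → ℝ)) (i : Fin n) :
    pd i (fun y => W1 u (t, y) w) x = W2 u (t, x) (0, Pi.single i 1) w := by
  rw [pd, (S5 hC2 ht x w).fderiv]; rfl

lemma tderiv2_eq {t : ℝ} (ht : 0 < t) (x : Fin n → ℝ) :
    tderiv2 u t x = W2 u (t, x) (1, 0) (1, 0) := by
  rw [tderiv2]
  have heq : (fun τ => tderiv u τ x) =ᶠ[nhds t] (fun τ => W1 u (τ, x) (1, 0)) := by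
    have : ∀ᶠ τ in nhds t, 0 < τ := isOpen_Ioi.mem_nhds ht
    exact this.mono fun τ hτ => tderiv_eq hC2 hτ x
  rw [Filter.EventuallyEq.deriv_eq heq]
  exact (S3 hC2 ht x (1, 0)).deriv

lemma pd_tderiv_eq {t : ℝ} (ht : 0 < t) (x : Fin n → ℝ) (i : Fin n) :
    pd i (tderiv u t) x = W2 u (t, x) (1, 0) (0, Pi.single i 1) := by
  have h1 : tderiv u t = fun y => W1 u (t, y) (1, 0) := funext fun y => tderiv_eq hC2 ht y
  rw [h1, pd_W1_eq hC2 ht x (1, 0) i, L6 hC2 ht]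

lemma pd_pd_eq {t : ℝ} (ht : 0 < t) (x : Fin n → ℝ) (i : Fin n) :
    pd i (pd i (u t)) x = W2 u (t, x) (0, Pi.single i 1) (0, Pi.single i 1) := by
  have h1 : pd i (u t) = fun y => W1 u (t, y) (0, Pi.single i 1) :=
    funext fun y => pd_eq hC2 ht y i
  rw [h1, pd_W1_eq hC2 ht x _ i]

lemma contDiff_slice {t : ℝ} (ht : 0 < t) : ContDiff ℝ 2 (u t) := by
  rw [contDiff_iff_contDiffAt]
  intro x
  exact (L1 hC2 ht).comp x (contDiffAt_const.prodMk contDiffAt_id)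

lemma contDiff_W1slice {t : ℝ} (ht : 0 < t) (w : ℝ × (Fin n → ℝ)) :
    ContDiff ℝ 1 (fun y => W1 u (t, y) w) := by
  rw [contDiff_iff_contDiffAt]
  intro x
  exact ((L3 hC2 ht).comp x (contDiffAt_const.prodMk contDiffAt_id)).clm_apply contDiffAt_const

omit hC2

lemma W1_zero_of_zero_on {V : Set (ℝ × (Fin n → ℝ))} (hVo : IsOpen V)
    (hV : ∀ p ∈ V, Ufun u p = 0) {q : ℝ × (Fin n → ℝ)} (hq : q ∈ V) : W1 u q = 0 := by
  have h : Ufun u =ᶠ[nhds q] fun _ => (0:ℝ) := Filter.eventuallyEq_of_mem (hVo.mem_nhds hq) hV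
  rw [W1, h.fderiv_eq, fderiv_const_apply]

lemma W2_zero_of_zero_on {V : Set (ℝ × (Fin n → ℝ))} (hVo : IsOpen V)
    (hV : ∀ p ∈ V, Ufun u p = 0) {q : ℝ × (Fin n → ℝ)} (hq : q ∈ V) : W2 u q = 0 := by
  have h1 : W1 u =ᶠ[nhds q] fun _ => (0 : (ℝ × (Fin n → ℝ)) →L[ℝ] ℝ) :=
    Filter.eventuallyEq_of_mem (hVo.mem_nhds hq) (fun p hp => W1_zero_of_zero_on hVo hV hp)
  rw [W2, h1.fderiv_eq, fderiv_const_apply]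

end Reg
set_option maxHeartbeats 1000000 in
theorem statement5 (n : ℕ) (hn : 1 ≤ n) (μ : ℝ) (hμ0 : 0 < μ) (hμ2 : μ < 2)
    (u : ℝ → (Fin n → ℝ) → ℝ) (hu : IsSol n μ u) :
    ∀ t : ℝ, 0 < t →
      HasDerivAt (fun τ => E2 μ u τ)
        (-((μ / (1 + t)) * E2 μ u t
          + (μ * (2 - μ) / (4 * (1 + t) ^ 3)) * ∫ x, (u t x) ^ 2)) t := by
  intro t ht
  obtain ⟨hC2, hPDE, hKex⟩ := hu
  obtain ⟨K, hKc, hK0⟩ := hKex (t + 1) (by linarith)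
  have hC2 : ContDiffOn ℝ 2 (Ufun u) (Set.Ici (0:ℝ) ×ˢ Set.univ) := hC2
  have h1t : (0:ℝ) < 1 + t := by linarith
  set ε : ℝ := min (t/2) (1/2) with hε_def
  have hε : 0 < ε := lt_min (by linarith) (by norm_num)
  have hcb : ∀ τ ∈ Metric.closedBall t ε, 0 < τ ∧ τ < t + 1 := by
    intro τ hτ
    rw [Metric.mem_closedBall, Real.dist_eq, abs_le] at hτ
    constructor
    · have h := min_le_left (t/2) (1/2); have := hτ.1
      simp only [hε_def] at *; linarith
    · have h := min_le_right (t/2) (1/2); have := hτ.2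
      simp only [hε_def] at *; linarith
  have hb : ∀ τ ∈ Metric.ball t ε, 0 < τ :=
    fun τ hτ => (hcb τ (Metric.ball_subset_closedBall hτ)).1
  -- vanishing of W1, W2 outside K
  have hVzero : ∀ τ, 0 < τ → τ < t + 1 → ∀ x, x ∉ K →
      W1 u (τ, x) = 0 ∧ W2 u (τ, x) = 0 := by
    intro τ hτ0 hτ1 x hx
    have hVo : IsOpen ((Set.Ioo (0:ℝ) (t+1)) ×ˢ Kᶜ) :=
      isOpen_Ioo.prod hKc.isClosed.isOpen_compl
    have hV : ∀ p ∈ (Set.Ioo (0:ℝ) (t+1)) ×ˢ Kᶜ, Ufun u p = 0 := by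
      rintro ⟨σ, y⟩ ⟨hσ, hy⟩
      exact hK0 σ ⟨hσ.1.le, hσ.2.le⟩ y hy
    have hq : (τ, x) ∈ (Set.Ioo (0:ℝ) (t+1)) ×ˢ Kᶜ := ⟨⟨hτ0, hτ1⟩, hx⟩
    exact ⟨W1_zero_of_zero_on hVo hV hq, W2_zero_of_zero_on hVo hV hq⟩
  have hzW1 : ∀ τ, 0 < τ → τ < t + 1 → ∀ w, ∀ x ∉ K, W1 u (τ, x) w = 0 :=
    fun τ h0 h1 w x hx => by rw [(hVzero τ h0 h1 x hx).1]; rfl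
  have hzW2 : ∀ τ, 0 < τ → τ < t + 1 → ∀ w v, ∀ x ∉ K, W2 u (τ, x) w v = 0 :=
    fun τ h0 h1 w v x hx => by rw [(hVzero τ h0 h1 x hx).2]; rfl
  have hzf0 : ∀ x ∉ K, u t x = 0 := fun x hx => hK0 t ⟨ht.le, by linarith⟩ x hx
  -- integrability helper
  have integr : ∀ h : (Fin n → ℝ) → ℝ, Continuous h → (∀ x ∉ K, h x = 0) → Integrable h :=
    fun h hc hz => hc.integrable_of_hasCompactSupport (HasCompactSupport.intro hKc hz)
  -- continuity of slices
  have contW1 : ∀ τ, 0 < τ → ∀ w : ℝ × (Fin n → ℝ), Continuous fun y => W1 u (τ, y) w :=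
    fun τ hτ w => (contDiff_W1slice hC2 hτ w).continuous
  have catW1 : ∀ q : ℝ × (Fin n → ℝ), 0 < q.1 → ∀ w, ContinuousAt (fun p => W1 u p w) q :=
    fun q hq w =>
      ((ContinuousLinearMap.apply ℝ ℝ w).continuous.continuousAt).comp (L5' hC2 hq)
  have catW2 : ∀ q : ℝ × (Fin n → ℝ), 0 < q.1 → ∀ w v, ContinuousAt (fun p => W2 u p w v) q :=
    fun q hq w v =>
      ((ContinuousLinearMap.apply ℝ ℝ v).continuous.continuousAt).comp
        (((ContinuousLinearMap.apply ℝ ((ℝ × (Fin n → ℝ)) →L[ℝ] ℝ) w).continuous.continuousAt).comp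
          (L5 hC2 hq))
  have contW2 : ∀ w v : ℝ × (Fin n → ℝ), Continuous fun y => W2 u (t, y) w v := by
    intro w v
    rw [continuous_iff_continuousAt]
    intro x
    exact (catW2 (t, x) ht w v).comp ((continuous_const.prodMk continuous_id).continuousAt)
  have hf0cont : Continuous (u t) := (contDiff_slice hC2 ht).continuous
  -- PDE in terms of W2
  have pde : ∀ x, W2 u (t, x) (1,0) (1,0)
      = (∑ i, W2 u (t, x) (0, Pi.single i 1) (0, Pi.single i 1))
        - (μ/(1+t)) * W1 u (t, x) (1, 0) := by
    intro x
    have h := hPDE t ht.le x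
    rw [tderiv2_eq hC2 ht, tderiv_eq hC2 ht] at h
    have hl : lap (u t) x = ∑ i, W2 u (t,x) (0, Pi.single i 1) (0, Pi.single i 1) := by
      rw [lap]; exact Finset.sum_congr rfl fun i _ => pd_pd_eq hC2 ht x i
    rw [hl] at h
    linarith
  -- named integrals
  set A := ∫ x, gradSq (u t) x with hA_def
  set B := ∫ x, (tderiv u t x)^2 with hB_def
  set C := ∫ x, u t x * tderiv u t x with hC_def
  set D := ∫ x, (u t x)^2 with hD_def
  -- values of E0, E1 at t
  have hgradeq : ∀ x, gradSq (u t) x = ∑ i, (W1 u (t,x) (0, Pi.single i 1))^2 := by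
    intro x
    rw [gradSq]
    exact Finset.sum_congr rfl fun i _ => by rw [pd_eq hC2 ht]
  have hzg : ∀ x ∉ K, gradSq (u t) x = 0 := by
    intro x hx
    rw [hgradeq]
    exact Finset.sum_eq_zero fun i _ => by
      rw [hzW1 t ht (by linarith) _ x hx]; ring
  have hIgrad : Integrable (fun x => gradSq (u t) x) := by
    refine integr _ ?_ hzg
    have : (fun x => gradSq (u t) x) = fun x => ∑ i, (W1 u (t,x) (0, Pi.single i 1))^2 :=
      funext hgradeq
    rw [this]
    exact continuous_finset_sum _ fun i _ => (contW1 t ht _).pow 2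
  have hwcont : Continuous (fun x => tderiv u t x) := by
    have : (fun x => tderiv u t x) = fun x => W1 u (t,x) (1,0) :=
      funext fun x => tderiv_eq hC2 ht x
    rw [this]; exact contW1 t ht _
  have hzw : ∀ x ∉ K, tderiv u t x = 0 := fun x hx => by
    rw [tderiv_eq hC2 ht]; exact hzW1 t ht (by linarith) _ x hx
  have hIB : Integrable (fun x => (tderiv u t x)^2) :=
    integr _ (hwcont.pow 2) (fun x hx => by rw [hzw x hx]; ring)
  have hIC : Integrable (fun x => u t x * tderiv u t x) :=
    integr _ (hf0cont.mul hwcont) (fun x hx => by rw [hzf0 x hx]; ring)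
  have hID : Integrable (fun x => (u t x)^2) :=
    integr _ (hf0cont.pow 2) (fun x hx => by rw [hzf0 x hx]; ring)
  have hE0t : E0 u t = (1/2) * (A + B) := by
    rw [E0, hA_def, hB_def, integral_add hIgrad hIB]
  have hE1t : E1 u t = C + D / (2 * (1 + t)) := by
    rw [E1, hC_def, hD_def, integral_add hIC (hID.div_const _), integral_div]
  -- derivative of E0
  have HD0 : HasDerivAt (fun τ => E0 u τ) (-((μ/(1+t)) * B)) t := by
    have HDraw : HasDerivAt
        (fun τ => ∫ x, (1/2 : ℝ) * ((∑ i, (W1 u (τ, x) (0, Pi.single i 1))^2)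
          + (W1 u (τ, x) (1,0))^2))
        (∫ x, ((∑ i, W1 u (t, x) (0, Pi.single i 1) * W2 u (t, x) (1,0) (0, Pi.single i 1))
          + W1 u (t, x) (1,0) * W2 u (t, x) (1,0) (1,0))) t := by
      refine hasDerivAt_integral_local
        (G := fun q => (1/2 : ℝ) * ((∑ i, (W1 u q (0, Pi.single i 1))^2) + (W1 u q (1,0))^2))
        (G' := fun q => (∑ i, W1 u q (0, Pi.single i 1) * W2 u q (1,0) (0, Pi.single i 1))
          + W1 u q (1,0) * W2 u q (1,0) (1,0))
        hKc hε ?_ ?_ ?_ ?_ ?_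
      · intro τ hτ
        exact continuous_const.mul ((continuous_finset_sum _ fun i _ =>
          (contW1 τ (hb τ hτ) _).pow 2).add ((contW1 τ (hb τ hτ) _).pow 2))
      · intro x hx
        have h0 : ∀ w, W1 u (t,x) w = 0 := fun w => hzW1 t ht (by linarith) w x hx
        simp [h0]
      · rintro ⟨τ, x⟩ ⟨hτ, -⟩
        have hτ0 : 0 < τ := (hcb τ hτ).1
        have hsum : ContinuousAt (fun p : ℝ × (Fin n → ℝ) =>
            ∑ i, W1 u p (0, Pi.single i 1) * W2 u p (1,0) (0, Pi.single i 1)) (τ, x) :=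
          tendsto_finset_sum _ fun i _ =>
            (catW1 (τ,x) hτ0 _).mul (catW2 (τ,x) hτ0 _ _)
        exact (hsum.add ((catW1 (τ,x) hτ0 _).mul (catW2 (τ,x) hτ0 _ _))).continuousWithinAt
      · intro τ hτ x hx
        have hτ0 : 0 < τ := (hcb τ hτ).1
        have hτ1 : τ < t + 1 := (hcb τ hτ).2
        have h1 : ∀ w, W1 u (τ,x) w = 0 := fun w => hzW1 τ hτ0 hτ1 w x hx
        have h2 : ∀ w v, W2 u (τ,x) w v = 0 := fun w v => hzW2 τ hτ0 hτ1 w v x hx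
        simp [h1, h2]
      · intro x τ hτ
        have hτ0 := hb τ hτ
        have h1 : ∀ i : Fin n, HasDerivAt (fun τ' => (W1 u (τ',x) (0, Pi.single i 1))^2)
            (2 * W1 u (τ,x) (0, Pi.single i 1) * W2 u (τ,x) (1,0) (0, Pi.single i 1)) τ :=
          fun i => by simpa using (S3 hC2 hτ0 x (0, Pi.single i 1)).fun_pow 2
        have h2 : HasDerivAt (fun τ' => (W1 u (τ',x) (1,0))^2)
            (2 * W1 u (τ,x) (1,0) * W2 u (τ,x) (1,0) (1,0)) τ := by
          simpa using (S3 hC2 hτ0 x (1,0)).fun_pow 2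
        have h3 := ((HasDerivAt.fun_sum (fun i (_ : i ∈ Finset.univ) => h1 i)).fun_add h2).const_mul
          (1/2 : ℝ)
        refine h3.congr_deriv ?_
        rw [mul_add, Finset.mul_sum]
        exact congrArg₂ (· + ·) (Finset.sum_congr rfl fun i _ => by ring) (by ring)
    have hE0eq : ∀ τ ∈ Metric.ball t ε, E0 u τ
        = ∫ x, (1/2 : ℝ) * ((∑ i, (W1 u (τ, x) (0, Pi.single i 1))^2)
          + (W1 u (τ, x) (1,0))^2) := by
      intro τ hτ
      have hτ0 := hb τ hτ
      rw [E0, ← integral_const_mul]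
      refine integral_congr_ae (Filter.Eventually.of_forall fun x => ?_)
      beta_reduce
      have hg : gradSq (u τ) x = ∑ i, (W1 u (τ,x) (0, Pi.single i 1))^2 := by
        rw [gradSq]; exact Finset.sum_congr rfl fun i _ => by rw [pd_eq hC2 hτ0]
      rw [hg, tderiv_eq hC2 hτ0]
    have HD0' : HasDerivAt (fun τ => E0 u τ)
        (∫ x, ((∑ i, W1 u (t, x) (0, Pi.single i 1) * W2 u (t, x) (1,0) (0, Pi.single i 1))
          + W1 u (t, x) (1,0) * W2 u (t, x) (1,0) (1,0))) t :=
      HDraw.congr_of_eventuallyEq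
        (Filter.eventuallyEq_of_mem (Metric.ball_mem_nhds t hε) hE0eq)
    refine HD0'.congr_deriv ?_
    have hIi : ∀ i : Fin n, Integrable (fun x =>
        W1 u (t,x) (0, Pi.single i 1) * W2 u (t,x) (1,0) (0, Pi.single i 1)) := fun i =>
      integr _ ((contW1 t ht _).mul (contW2 _ _))
        (fun x hx => by rw [hzW1 t ht (by linarith) _ x hx, zero_mul])
    have hIw2 : Integrable (fun x => W1 u (t,x) (1,0) * W2 u (t,x) (1,0) (1,0)) :=
      integr _ ((contW1 t ht _).mul (contW2 _ _))
        (fun x hx => by rw [hzW1 t ht (by linarith) _ x hx, zero_mul])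
    have hIZ : ∀ i : Fin n, Integrable (fun x =>
        W1 u (t,x) (1,0) * W2 u (t,x) (0, Pi.single i 1) (0, Pi.single i 1)) := fun i =>
      integr _ ((contW1 t ht _).mul (contW2 _ _))
        (fun x hx => by rw [hzW1 t ht (by linarith) _ x hx, zero_mul])
    have hIWW : Integrable (fun x => W1 u (t,x) (1,0) * W1 u (t,x) (1,0)) :=
      integr _ ((contW1 t ht _).mul (contW1 t ht _))
        (fun x hx => by rw [hzW1 t ht (by linarith) _ x hx, zero_mul])
    rw [integral_add (integrable_finset_sum _ (fun i _ => hIi i)) hIw2,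
      integral_finset_sum _ (fun i _ => hIi i)]
    -- integration by parts in each summand
    have hibp : ∀ i : Fin n,
        ∫ x, W1 u (t,x) (0, Pi.single i 1) * W2 u (t,x) (1,0) (0, Pi.single i 1)
        = - ∫ x, W1 u (t,x) (1,0) * W2 u (t,x) (0, Pi.single i 1) (0, Pi.single i 1) := by
      intro i
      have h := ibp_mul (fun y => W1 u (t,y) (0, Pi.single i 1)) (fun y => W1 u (t,y) (1,0))
        (contDiff_W1slice hC2 ht _) (contDiff_W1slice hC2 ht _)
        (HasCompactSupport.intro hKc (fun x hx => hzW1 t ht (by linarith) _ x hx)) i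
      have e1 : ∀ x : Fin n → ℝ, fderiv ℝ (fun y => W1 u (t,y) (0, Pi.single i 1)) x
          (Pi.single i 1) = W2 u (t,x) (0, Pi.single i 1) (0, Pi.single i 1) := by
        intro x
        have := pd_W1_eq hC2 ht x (0, Pi.single i 1) i
        simpa [pd] using this
      have e2 : ∀ x : Fin n → ℝ, fderiv ℝ (fun y => W1 u (t,y) (1,0)) x
          (Pi.single i 1) = W2 u (t,x) (1,0) (0, Pi.single i 1) := by
        intro x
        have := pd_W1_eq hC2 ht x ((1:ℝ),(0: Fin n → ℝ)) i
        rw [L6 hC2 ht] at this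
        simpa [pd] using this
      beta_reduce at h
      have hL : (∫ x, fderiv ℝ (fun y => W1 u (t,y) (0, Pi.single i 1)) x (Pi.single i 1)
          * W1 u (t,x) (1,0))
          = ∫ x, W1 u (t,x) (1,0) * W2 u (t,x) (0, Pi.single i 1) (0, Pi.single i 1) :=
        integral_congr_ae (Filter.Eventually.of_forall fun x => by
          beta_reduce; rw [e1 x, mul_comm])
      have hR : (∫ x, W1 u (t,x) (0, Pi.single i 1)
          * fderiv ℝ (fun y => W1 u (t,y) (1,0)) x (Pi.single i 1))
          = ∫ x, W1 u (t,x) (0, Pi.single i 1) * W2 u (t,x) (1,0) (0, Pi.single i 1) :=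
        integral_congr_ae (Filter.Eventually.of_forall fun x => by
          beta_reduce; rw [e2 x])
      rw [hL, hR] at h
      linarith
    rw [Finset.sum_congr rfl (fun i _ => hibp i)]
    -- PDE substitution in the second integral
    have hsplit : ∫ x, W1 u (t,x) (1,0) * W2 u (t,x) (1,0) (1,0)
        = (∑ i, ∫ x, W1 u (t,x) (1,0) * W2 u (t,x) (0, Pi.single i 1) (0, Pi.single i 1))
          - (μ/(1+t)) * ∫ x, W1 u (t,x) (1,0) * W1 u (t,x) (1,0) := by
      rw [← integral_finset_sum _ (fun i _ => hIZ i), ← integral_const_mul,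
        ← integral_sub (integrable_finset_sum _ (fun i _ => hIZ i)) (hIWW.const_mul _)]
      refine integral_congr_ae (Filter.Eventually.of_forall fun x => ?_)
      beta_reduce
      rw [pde x, mul_sub, Finset.mul_sum]
      ring
    rw [hsplit]
    have hBW : ∫ x, W1 u (t,x) (1,0) * W1 u (t,x) (1,0) = B := by
      rw [hB_def]
      refine integral_congr_ae (Filter.Eventually.of_forall fun x => ?_)
      beta_reduce
      rw [tderiv_eq hC2 ht x]; ring
    rw [hBW, Finset.sum_neg_distrib]
    ring
  -- derivative of E1
  have HD1 : HasDerivAt (fun τ => E1 u τ)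
      (B - A - ((μ - 1)/(1+t)) * C - D / (2 * (1+t)^2)) t := by
    have HDraw : HasDerivAt
        (fun τ => ∫ x, (u τ x * W1 u (τ, x) (1,0) + (u τ x)^2 / (2 * (1 + τ))))
        (∫ x, (W1 u (t, x) (1,0) * W1 u (t, x) (1,0) + u t x * W2 u (t, x) (1,0) (1,0)
          + u t x * W1 u (t, x) (1,0) / (1 + t) - (u t x)^2 / (2 * (1 + t)^2))) t := by
      refine hasDerivAt_integral_local
        (G := fun q => u q.1 q.2 * W1 u q (1,0) + (u q.1 q.2)^2 / (2 * (1 + q.1)))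
        (G' := fun q => W1 u q (1,0) * W1 u q (1,0) + u q.1 q.2 * W2 u q (1,0) (1,0)
          + u q.1 q.2 * W1 u q (1,0) / (1 + q.1) - (u q.1 q.2)^2 / (2 * (1 + q.1)^2))
        hKc hε ?_ ?_ ?_ ?_ ?_
      · intro τ hτ
        have hτ0 := hb τ hτ
        show Continuous fun y => u τ y * W1 u (τ, y) (1,0) + (u τ y)^2 / (2 * (1 + τ))
        exact ((contDiff_slice hC2 hτ0).continuous.mul (contW1 τ hτ0 _)).add
          (((contDiff_slice hC2 hτ0).continuous.pow 2).div_const _)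
      · intro x hx
        have h0 : u t x = 0 := hzf0 x hx
        simp [h0]
      · rintro ⟨τ, x⟩ ⟨hτ, -⟩
        have hτ0 : 0 < τ := (hcb τ hτ).1
        have hcU : ContinuousAt (fun p : ℝ × (Fin n → ℝ) => u p.1 p.2) (τ,x) :=
          (L1 hC2 hτ0).continuousAt
        have hc1 : ContinuousAt (fun p : ℝ × (Fin n → ℝ) => (1:ℝ) + p.1) (τ,x) := by fun_prop
        have hc2 : ContinuousAt (fun p : ℝ × (Fin n → ℝ) => 2 * ((1:ℝ) + p.1)^2) (τ,x) := by
          fun_prop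
        have hne1 : (1:ℝ) + τ ≠ 0 := by positivity
        have hne2 : 2 * ((1:ℝ) + τ)^2 ≠ 0 := by positivity
        exact ((((catW1 (τ,x) hτ0 _).mul (catW1 (τ,x) hτ0 _)).add
          (hcU.mul (catW2 (τ,x) hτ0 _ _))).add
          ((hcU.mul (catW1 (τ,x) hτ0 _)).div hc1 hne1)).sub
          ((hcU.pow 2).div hc2 hne2) |>.continuousWithinAt
      · intro τ hτ x hx
        have hτ0 : 0 < τ := (hcb τ hτ).1
        have hτ1 : τ < t + 1 := (hcb τ hτ).2
        have h0 : u τ x = 0 := hK0 τ ⟨hτ0.le, hτ1.le⟩ x hx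
        have h1 : ∀ w, W1 u (τ,x) w = 0 := fun w => hzW1 τ hτ0 hτ1 w x hx
        simp [h0, h1]
      · intro x τ hτ
        have hτ0 := hb τ hτ
        have hu' := S1 hC2 hτ0 x
        have hv' := S3 hC2 hτ0 x (1,0)
        have h1 := hu'.mul hv'
        have hden' : HasDerivAt (fun τ' : ℝ => 2*(1+τ')) 2 τ := by
          simpa using ((hasDerivAt_id τ).const_add (1:ℝ)).const_mul (2:ℝ)
        have hne : (2*((1:ℝ)+τ)) ≠ 0 := by positivity
        have h2 := (hu'.fun_pow 2).div hden' hne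
        refine (h1.add h2).congr_deriv ?_
        have hne1 : ((1:ℝ)+τ) ≠ 0 := by positivity
        field_simp
        ring
    have hE1eq : ∀ τ ∈ Metric.ball t ε, E1 u τ
        = ∫ x, (u τ x * W1 u (τ, x) (1,0) + (u τ x)^2 / (2 * (1 + τ))) := by
      intro τ hτ
      have hτ0 := hb τ hτ
      rw [E1]
      refine integral_congr_ae (Filter.Eventually.of_forall fun x => ?_)
      beta_reduce
      rw [tderiv_eq hC2 hτ0]
    have HD1' : HasDerivAt (fun τ => E1 u τ)
        (∫ x, (W1 u (t, x) (1,0) * W1 u (t, x) (1,0) + u t x * W2 u (t, x) (1,0) (1,0)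
          + u t x * W1 u (t, x) (1,0) / (1 + t) - (u t x)^2 / (2 * (1 + t)^2))) t :=
      HDraw.congr_of_eventuallyEq
        (Filter.eventuallyEq_of_mem (Metric.ball_mem_nhds t hε) hE1eq)
    refine HD1'.congr_deriv ?_
    -- integrability of the pieces
    have hIWW : Integrable (fun x => W1 u (t,x) (1,0) * W1 u (t,x) (1,0)) :=
      integr _ ((contW1 t ht _).mul (contW1 t ht _))
        (fun x hx => by rw [hzW1 t ht (by linarith) _ x hx, zero_mul])
    have hIuN : Integrable (fun x => u t x * W2 u (t,x) (1,0) (1,0)) :=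
      integr _ (hf0cont.mul (contW2 _ _)) (fun x hx => by rw [hzf0 x hx, zero_mul])
    have hIuW : Integrable (fun x => u t x * W1 u (t,x) (1,0) / (1+t)) :=
      ((integr _ (hf0cont.mul (contW1 t ht _))
        (fun x hx => by rw [Pi.mul_apply, hzf0 x hx, zero_mul])).div_const _)
    have hIu2 : Integrable (fun x => (u t x)^2 / (2*(1+t)^2)) := hID.div_const _
    have hI12 : Integrable (fun x => W1 u (t,x) (1,0) * W1 u (t,x) (1,0)
        + u t x * W2 u (t,x) (1,0) (1,0)) := hIWW.add hIuN
    have hI123 : Integrable (fun x => W1 u (t,x) (1,0) * W1 u (t,x) (1,0)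
        + u t x * W2 u (t,x) (1,0) (1,0) + u t x * W1 u (t,x) (1,0) / (1+t)) := hI12.add hIuW
    rw [integral_sub hI123 hIu2, integral_add hI12 hIuW, integral_add hIWW hIuN]
    -- identify the pieces
    have hBW : ∫ x, W1 u (t,x) (1,0) * W1 u (t,x) (1,0) = B := by
      rw [hB_def]
      refine integral_congr_ae (Filter.Eventually.of_forall fun x => ?_)
      beta_reduce
      rw [tderiv_eq hC2 ht x]; ring
    have hCW : ∫ x, u t x * W1 u (t,x) (1,0) / (1+t) = C / (1+t) := by
      rw [integral_div, hC_def]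
      congr 1
      refine integral_congr_ae (Filter.Eventually.of_forall fun x => ?_)
      beta_reduce
      rw [tderiv_eq hC2 ht x]
    have hDW : ∫ x, (u t x)^2 / (2*(1+t)^2) = D / (2*(1+t)^2) := by
      rw [integral_div, hD_def]
    -- the u·∂ₜ²u term via PDE and integration by parts
    have hIZ : ∀ i : Fin n, Integrable (fun x =>
        u t x * W2 u (t,x) (0, Pi.single i 1) (0, Pi.single i 1)) := fun i =>
      integr _ (hf0cont.mul (contW2 _ _)) (fun x hx => by rw [hzf0 x hx, zero_mul])
    have hIuw : Integrable (fun x => u t x * W1 u (t,x) (1,0)) :=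
      integr _ (hf0cont.mul (contW1 t ht _)) (fun x hx => by rw [hzf0 x hx, zero_mul])
    have hsplit : ∫ x, u t x * W2 u (t,x) (1,0) (1,0)
        = (∑ i, ∫ x, u t x * W2 u (t,x) (0, Pi.single i 1) (0, Pi.single i 1))
          - (μ/(1+t)) * ∫ x, u t x * W1 u (t,x) (1,0) := by
      rw [← integral_finset_sum _ (fun i _ => hIZ i), ← integral_const_mul,
        ← integral_sub (integrable_finset_sum _ (fun i _ => hIZ i)) (hIuw.const_mul _)]
      refine integral_congr_ae (Filter.Eventually.of_forall fun x => ?_)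
      beta_reduce
      rw [pde x, mul_sub, Finset.mul_sum]
      ring
    have hibp2 : ∀ i : Fin n,
        ∫ x, u t x * W2 u (t,x) (0, Pi.single i 1) (0, Pi.single i 1)
        = - ∫ x, (W1 u (t,x) (0, Pi.single i 1))^2 := by
      intro i
      have h := ibp_mul (u t) (fun y => W1 u (t,y) (0, Pi.single i 1))
        ((contDiff_slice hC2 ht).of_le one_le_two) (contDiff_W1slice hC2 ht _)
        (HasCompactSupport.intro hKc hzf0) i
      beta_reduce at h
      have e1 : ∀ x : Fin n → ℝ, fderiv ℝ (u t) x (Pi.single i 1)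
          = W1 u (t,x) (0, Pi.single i 1) := by
        intro x
        have := pd_eq hC2 ht x i
        simpa [pd] using this
      have e2 : ∀ x : Fin n → ℝ, fderiv ℝ (fun y => W1 u (t,y) (0, Pi.single i 1)) x
          (Pi.single i 1) = W2 u (t,x) (0, Pi.single i 1) (0, Pi.single i 1) := by
        intro x
        have := pd_W1_eq hC2 ht x (0, Pi.single i 1) i
        simpa [pd] using this
      have hL : (∫ x, fderiv ℝ (u t) x (Pi.single i 1) * W1 u (t,x) (0, Pi.single i 1))
          = ∫ x, (W1 u (t,x) (0, Pi.single i 1))^2 :=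
        integral_congr_ae (Filter.Eventually.of_forall fun x => by
          beta_reduce; rw [e1 x]; ring)
      have hR : (∫ x, u t x * fderiv ℝ (fun y => W1 u (t,y) (0, Pi.single i 1)) x
          (Pi.single i 1))
          = ∫ x, u t x * W2 u (t,x) (0, Pi.single i 1) (0, Pi.single i 1) :=
        integral_congr_ae (Filter.Eventually.of_forall fun x => by
          beta_reduce; rw [e2 x])
      rw [hL, hR] at h
      linarith
    have hAW : ∑ i : Fin n, ∫ x, (W1 u (t,x) (0, Pi.single i 1))^2 = A := by
      have hIgi : ∀ i : Fin n, Integrable (fun x => (W1 u (t,x) (0, Pi.single i 1))^2) :=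
        fun i => integr _ ((contW1 t ht _).pow 2)
          (fun x hx => by rw [hzW1 t ht (by linarith) _ x hx]; ring)
      rw [← integral_finset_sum _ (fun i _ => hIgi i), hA_def]
      refine integral_congr_ae (Filter.Eventually.of_forall fun x => ?_)
      beta_reduce
      exact (hgradeq x).symm
    have hCW' : ∫ x, u t x * W1 u (t,x) (1,0) = C := by
      rw [hC_def]
      refine integral_congr_ae (Filter.Eventually.of_forall fun x => ?_)
      beta_reduce
      rw [tderiv_eq hC2 ht x]
    rw [hsplit, Finset.sum_congr rfl (fun i _ => hibp2 i), Finset.sum_neg_distrib, hAW,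
      hBW, hCW, hCW', hDW]
    field_simp
    ring
  -- coefficient derivative
  have hden : HasDerivAt (fun τ : ℝ => 2*(1+τ)) 2 t := by
    simpa using ((hasDerivAt_id t).const_add (1:ℝ)).const_mul (2:ℝ)
  have hcder : HasDerivAt (fun τ : ℝ => μ / (2*(1+τ)))
      ((0 * (2*(1+t)) - μ * 2) / (2*(1+t))^2) t :=
    (hasDerivAt_const t μ).div hden (by positivity)
  have HD2 := HD0.add (hcder.mul HD1)
  have hgoal : HasDerivAt (fun τ => E2 μ u τ)
      (-((μ/(1+t)) * B) + (((0 * (2*(1+t)) - μ * 2) / (2*(1+t))^2) * E1 u t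
        + (μ / (2*(1+t))) * (B - A - ((μ - 1)/(1+t)) * C - D / (2 * (1+t)^2)))) t := by
    refine HD2.congr_of_eventuallyEq (Filter.Eventually.of_forall fun τ => ?_)
    simp only [E2]
    rfl
  refine hgoal.congr_deriv ?_
  simp only [E2]
  rw [hE0t, hE1t]
  have h1t' : (1+t) ≠ 0 := ne_of_gt h1t
  field_simp
  ring
end
end

section
/- Let n ≥ 1, μ > 2, and let u be a classical compactly supported solution of the linear damped wave equation ∂_t²u − Δu + (μ/(1+t))∂_t u = 0 on [0,∞) × ℝⁿ. Define E₀(t) := (1/2)∫_{ℝⁿ}( |∇_x u|² + (∂_t u)² ) dx, E₃(t) := ∫_{ℝⁿ}( u ∂_t u + (μ−1) u²/(2(1+t)) ) dx, and E₄(t) := E₀(t) + E₃(t)/(1+t). Then E₄ is differentiable on (0,∞) and satisfies, for all t > 0: d/dt E₄(t) + (2/(1+t)) E₄(t) + ((μ−2)/(1+t)) ∫_{ℝⁿ} (∂_t u(t,x))² dx = 0. -/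
open MeasureTheory Real Set

noncomputable section

/-- The functional `E₃(t) = ∫ ( u ∂ₜu + (μ−1) u²/(2(1+t)) ) dx`. -/
def E3 {n : ℕ} (μ : ℝ) (u : ℝ → (Fin n → ℝ) → ℝ) (t : ℝ) : ℝ :=
  ∫ x, (u t x * tderiv u t x + (μ - 1) * (u t x) ^ 2 / (2 * (1 + t)))

/-- `E₄(t) = E₀(t) + E₃(t)/(1+t)`. -/
def E4 {n : ℕ} (μ : ℝ) (u : ℝ → (Fin n → ℝ) → ℝ) (t : ℝ) : ℝ :=
  E0 u t + E3 μ u t / (1 + t)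

namespace Stmt8Aux

variable {n : ℕ}

lemma contAt_clm_apply {X E F : Type*} [TopologicalSpace X] [NormedAddCommGroup E]
    [NormedSpace ℝ E] [NormedAddCommGroup F] [NormedSpace ℝ F]
    {f : X → (E →L[ℝ] F)} {g : X → E} {x : X}
    (hf : ContinuousAt f x) (hg : ContinuousAt g x) :
    ContinuousAt (fun y => f y (g y)) x :=
  ContinuousAt.comp (f := fun y => (f y, g y)) isBoundedBilinearMap_apply.continuous.continuousAt (hf.prodMk hg)

lemma integK {K : Set (Fin n → ℝ)} (hK : IsCompact K) {f : (Fin n → ℝ) → ℝ}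
    (hf : Continuous f) (h0 : ∀ x ∉ K, f x = 0) : Integrable f :=
  hf.integrable_of_hasCompactSupport (HasCompactSupport.intro hK h0)

lemma hasDerivAt_int {a b : ℝ} {K : Set (Fin n → ℝ)} (hK : IsCompact K)
    (φ ψ : ℝ → (Fin n → ℝ) → ℝ)
    (hφc : ∀ τ ∈ Ioo a b, ∀ x, ContinuousAt (fun q : ℝ × (Fin n → ℝ) => φ q.1 q.2) (τ, x))
    (hψc : ∀ τ ∈ Ioo a b, ∀ x, ContinuousAt (fun q : ℝ × (Fin n → ℝ) => ψ q.1 q.2) (τ, x))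
    (hder : ∀ τ ∈ Ioo a b, ∀ x, HasDerivAt (fun s => φ s x) (ψ τ x) τ)
    (hφ0 : ∀ τ ∈ Ioo a b, ∀ x, x ∉ K → φ τ x = 0)
    (hψ0 : ∀ τ ∈ Ioo a b, ∀ x, x ∉ K → ψ τ x = 0)
    {t : ℝ} (ht : t ∈ Ioo a b) :
    HasDerivAt (fun τ => ∫ x, φ τ x) (∫ x, ψ t x) t := by
  have hφslice : ∀ τ ∈ Ioo a b, Continuous (φ τ) := fun τ hτ =>
    continuous_iff_continuousAt.2 fun x =>
      (hφc τ hτ x).comp ((Continuous.prodMk_right τ).continuousAt)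
  have hψslice : ∀ τ ∈ Ioo a b, Continuous (ψ τ) := fun τ hτ =>
    continuous_iff_continuousAt.2 fun x =>
      (hψc τ hτ x).comp ((Continuous.prodMk_right τ).continuousAt)
  obtain ⟨ε, hε, hball⟩ := Metric.isOpen_iff.1 isOpen_Ioo t ht
  have hsub : Metric.ball t (ε/2) ⊆ Ioo a b :=
    (Metric.ball_subset_ball (by linarith)).trans hball
  have hIccsub : Icc (t - ε/2) (t + ε/2) ⊆ Ioo a b := by
    rw [← Real.closedBall_eq_Icc]
    exact (Metric.closedBall_subset_ball (by linarith)).trans hball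
  have hcompact : IsCompact ((Icc (t - ε/2) (t + ε/2)) ×ˢ K) := isCompact_Icc.prod hK
  have hcontOn : ContinuousOn (fun q : ℝ × (Fin n → ℝ) => ψ q.1 q.2)
      ((Icc (t - ε/2) (t + ε/2)) ×ˢ K) := by
    intro q hq
    exact (hψc q.1 (hIccsub hq.1) q.2).continuousWithinAt
  obtain ⟨C, hC⟩ := hcompact.exists_bound_of_continuousOn hcontOn
  have hboundInt : Integrable (K.indicator (fun _ => C)) := by
    rw [integrable_indicator_iff hK.isClosed.measurableSet]
    exact integrableOn_const hK.measure_lt_top.ne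
  refine (hasDerivAt_integral_of_dominated_loc_of_deriv_le (Metric.ball_mem_nhds t (by linarith : (0:ℝ) < ε/2))
    ?_ ?_ ?_ ?_ hboundInt ?_).2
  · filter_upwards [isOpen_Ioo.mem_nhds ht] with τ hτ
    exact (hφslice τ hτ).aestronglyMeasurable
  · exact integK hK (hφslice t ht) (hφ0 t ht)
  · exact (hψslice t ht).aestronglyMeasurable
  · refine Filter.Eventually.of_forall fun x τ hτ => ?_
    by_cases hx : x ∈ K
    · have hτ' : τ ∈ Icc (t - ε/2) (t + ε/2) := by
        rw [← Real.closedBall_eq_Icc]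
        exact Metric.ball_subset_closedBall hτ
      simpa [Set.indicator_of_mem hx] using hC (τ, x) ⟨hτ', hx⟩
    · rw [hψ0 τ (hsub hτ) x hx]
      simp [Set.indicator_of_notMem hx]
  · exact Filter.Eventually.of_forall fun x τ hτ => hder τ (hsub hτ) x

variable (u : ℝ → (Fin n → ℝ) → ℝ)

def Fq : ℝ × (Fin n → ℝ) → ℝ := fun q => u q.1 q.2
def Gq : ℝ × (Fin n → ℝ) → (ℝ × (Fin n → ℝ)) →L[ℝ] ℝ := fderiv ℝ (Fq u)
def Hq : ℝ × (Fin n → ℝ) → (ℝ × (Fin n → ℝ)) →L[ℝ] (ℝ × (Fin n → ℝ)) →L[ℝ] ℝ :=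
  fderiv ℝ (Gq u)

variable {u}
variable (hreg : ∀ (τ : ℝ) (x : Fin n → ℝ), 0 < τ → ContDiffAt ℝ 2 (Fq u) (τ, x))

include hreg

section

variable {τ : ℝ} (hτ : 0 < τ) (x : Fin n → ℝ)
include hτ

lemma hasFDerivAt_F : HasFDerivAt (Fq u) (Gq u (τ, x)) (τ, x) :=
  ((hreg τ x hτ).differentiableAt (by norm_num)).hasFDerivAt

lemma contDiffAt_G : ContDiffAt ℝ 1 (Gq u) (τ, x) :=
  (hreg τ x hτ).fderiv_right (by norm_num)

lemma hasFDerivAt_G : HasFDerivAt (Gq u) (Hq u (τ, x)) (τ, x) :=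
  ((contDiffAt_G hreg hτ x).differentiableAt one_ne_zero).hasFDerivAt

lemma contAt_F : ContinuousAt (Fq u) (τ, x) := (hreg τ x hτ).continuousAt

lemma contAt_G : ContinuousAt (Gq u) (τ, x) := (contDiffAt_G hreg hτ x).continuousAt

lemma contAt_H : ContinuousAt (Hq u) (τ, x) :=
  ((contDiffAt_G hreg hτ x).fderiv_right (m := 0) (by norm_num)).continuousAt

lemma hasDerivAt_u : HasDerivAt (fun s => u s x) (Gq u (τ, x) (1, 0)) τ :=
  ((hasFDerivAt_F hreg hτ x).comp_hasDerivAt τ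
    ((hasDerivAt_id τ).prodMk (hasDerivAt_const τ x)) :)

lemma tderiv_eq : tderiv u τ x = Gq u (τ, x) (1, 0) :=
  (hasDerivAt_u hreg hτ x).deriv

lemma hasDerivAt_G_apply (c : ℝ × (Fin n → ℝ)) :
    HasDerivAt (fun s => Gq u (s, x) c) (Hq u (τ, x) (1, 0) c) τ := by
  have A : HasDerivAt (fun s => Gq u (s, x)) (Hq u (τ, x) (1, 0)) τ :=
    (hasFDerivAt_G hreg hτ x).comp_hasDerivAt τ
      ((hasDerivAt_id τ).prodMk (hasDerivAt_const τ x))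
  simpa using A.clm_apply (hasDerivAt_const τ c)

lemma hasDerivAt_tderiv :
    HasDerivAt (fun s => tderiv u s x) (Hq u (τ, x) (1, 0) (1, 0)) τ := by
  apply (hasDerivAt_G_apply hreg hτ x (1, 0)).congr_of_eventuallyEq
  filter_upwards [eventually_gt_nhds hτ] with s hs
  exact tderiv_eq hreg hs x

lemma tderiv2_eq : tderiv2 u τ x = Hq u (τ, x) (1, 0) (1, 0) :=
  (hasDerivAt_tderiv hreg hτ x).deriv

lemma hasFDerivAt_slice :
    HasFDerivAt (u τ) ((Gq u (τ, x)).comp (.inr ℝ ℝ (Fin n → ℝ))) x :=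
  (hasFDerivAt_F hreg hτ x).comp x (hasFDerivAt_prodMk_right τ x)

lemma pd_eq (i : Fin n) : pd i (u τ) x = Gq u (τ, x) (0, Pi.single i 1) := by
  rw [pd, (hasFDerivAt_slice hreg hτ x).fderiv]
  simp

lemma hasFDerivAt_G_slice (c : ℝ × (Fin n → ℝ)) :
    HasFDerivAt (fun y => Gq u (τ, y) c)
      (((Gq u (τ, x)).comp (0 : (Fin n → ℝ) →L[ℝ] (ℝ × (Fin n → ℝ)))) +
        ((Hq u (τ, x)).comp (.inr ℝ ℝ (Fin n → ℝ))).flip c) x := by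
  have A : HasFDerivAt (fun y => Gq u (τ, y)) ((Hq u (τ, x)).comp (.inr ℝ ℝ (Fin n → ℝ))) x :=
    (hasFDerivAt_G hreg hτ x).comp x (hasFDerivAt_prodMk_right τ x)
  exact A.clm_apply (hasFDerivAt_const c x)

lemma fderiv_G_slice (c : ℝ × (Fin n → ℝ)) (w : Fin n → ℝ) :
    fderiv ℝ (fun y => Gq u (τ, y) c) x w = Hq u (τ, x) (0, w) c := by
  rw [(hasFDerivAt_G_slice hreg hτ x c).fderiv]
  simp

lemma fderiv_F_slice (w : Fin n → ℝ) :
    fderiv ℝ (fun y => Fq u (τ, y)) x w = Gq u (τ, x) (0, w) := by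
  rw [show (fun y => Fq u (τ, y)) = u τ from rfl, (hasFDerivAt_slice hreg hτ x).fderiv]
  simp

lemma symmH (v w : ℝ × (Fin n → ℝ)) :
    Hq u (τ, x) v w = Hq u (τ, x) w v :=
  (hreg τ x hτ).isSymmSndFDerivAt (by simp) v w

lemma pd_tderiv_eq (i : Fin n) :
    pd i (fun y => tderiv u τ y) x = Hq u (τ, x) (1, 0) (0, Pi.single i 1) := by
  have hfun : (fun y => tderiv u τ y) = fun y => Gq u (τ, y) (1, 0) :=
    funext fun y => tderiv_eq hreg hτ y
  rw [pd, hfun, fderiv_G_slice hreg hτ x (1, 0) (Pi.single i 1),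
    symmH hreg hτ x]

lemma pd_pd_eq (i : Fin n) :
    pd i (pd i (u τ)) x = Hq u (τ, x) (0, Pi.single i 1) (0, Pi.single i 1) := by
  have hfun : pd i (u τ) = fun y => Gq u (τ, y) (0, Pi.single i 1) :=
    funext fun y => pd_eq hreg hτ y i
  rw [pd, hfun, fderiv_G_slice hreg hτ x]

end

end Stmt8Aux

open Stmt8Aux

theorem statement8 (n : ℕ) (hn : 1 ≤ n) (μ : ℝ) (hμ : 2 < μ)
    (u : ℝ → (Fin n → ℝ) → ℝ) (hu : IsSol n μ u) :
    ∀ t : ℝ, 0 < t →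
      HasDerivAt (fun τ => E4 μ u τ)
        (-((2 / (1 + t)) * E4 μ u t
          + ((μ - 2) / (1 + t)) * ∫ x, (tderiv u t x) ^ 2)) t := by
  classical
  obtain ⟨hreg0, hpde, hsupp⟩ := hu
  intro t ht
  have hreg : ∀ (τ : ℝ) (x : Fin n → ℝ), 0 < τ → ContDiffAt ℝ 2 (Fq u) (τ, x) := by
    intro τ x hτ
    exact hreg0.contDiffAt (Filter.mem_of_superset
      ((isOpen_Ioi.prod isOpen_univ).mem_nhds ⟨hτ, mem_univ x⟩)
      (Set.prod_mono Ioi_subset_Ici_self subset_rfl))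
  obtain ⟨K, hK, hK0⟩ := hsupp (t + 1) (by linarith)
  have htI : t ∈ Ioo (0:ℝ) (t + 1) := ⟨ht, by linarith⟩
  have h1t : (0:ℝ) < 1 + t := by linarith
  have hne : (1 + t) ≠ 0 := ne_of_gt h1t
  -- vanishing of F, G, H outside K
  have hF0 : ∀ τ ∈ Ioo (0:ℝ) (t+1), ∀ x, x ∉ K → Fq u (τ, x) = 0 :=
    fun τ hτ x hx => hK0 τ ⟨hτ.1.le, hτ.2.le⟩ x hx
  have hG0 : ∀ τ ∈ Ioo (0:ℝ) (t+1), ∀ x, x ∉ K → Gq u (τ, x) = 0 := by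
    intro τ hτ x hx
    have hev : Fq u =ᶠ[nhds (τ, x)] fun _ => (0:ℝ) := by
      filter_upwards [(isOpen_Ioo.prod hK.isClosed.isOpen_compl).mem_nhds
        (Set.mk_mem_prod hτ hx)] with q hq
      exact hF0 q.1 hq.1 q.2 hq.2
    rw [Gq, hev.fderiv_eq, fderiv_const_apply]
  have hH0 : ∀ τ ∈ Ioo (0:ℝ) (t+1), ∀ x, x ∉ K → Hq u (τ, x) = 0 := by
    intro τ hτ x hx
    have hev : Gq u =ᶠ[nhds (τ, x)] fun _ => (0 : (ℝ × (Fin n → ℝ)) →L[ℝ] ℝ) := by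
      filter_upwards [(isOpen_Ioo.prod hK.isClosed.isOpen_compl).mem_nhds
        (Set.mk_mem_prod hτ hx)] with q hq
      exact hG0 q.1 hq.1 q.2 hq.2
    rw [Hq, hev.fderiv_eq, fderiv_const_apply]
  -- joint continuity helpers
  have jF : ∀ τ ∈ Ioo (0:ℝ) (t+1), ∀ x : Fin n → ℝ,
      ContinuousAt (fun q : ℝ × (Fin n → ℝ) => Fq u q) (τ, x) :=
    fun τ hτ x => contAt_F hreg hτ.1 x
  have jG : ∀ (c : ℝ × (Fin n → ℝ)), ∀ τ ∈ Ioo (0:ℝ) (t+1), ∀ x : Fin n → ℝ,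
      ContinuousAt (fun q : ℝ × (Fin n → ℝ) => Gq u q c) (τ, x) :=
    fun c τ hτ x => contAt_clm_apply (contAt_G hreg hτ.1 x) continuousAt_const
  have jH : ∀ (c c' : ℝ × (Fin n → ℝ)), ∀ τ ∈ Ioo (0:ℝ) (t+1), ∀ x : Fin n → ℝ,
      ContinuousAt (fun q : ℝ × (Fin n → ℝ) => Hq u q c c') (τ, x) :=
    fun c c' τ hτ x => contAt_clm_apply
      (contAt_clm_apply (contAt_H hreg hτ.1 x) continuousAt_const) continuousAt_const
  -- derivative of the E0 integral
  have hP : HasDerivAt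
      (fun τ => ∫ x, ((∑ i, (Gq u (τ, x) (0, Pi.single i 1))^2) + (Gq u (τ, x) ((1:ℝ), (0 : Fin n → ℝ)))^2))
      (∫ x, ((∑ i, 2 * Gq u (t, x) (0, Pi.single i 1) * Hq u (t, x) ((1:ℝ), (0 : Fin n → ℝ)) (0, Pi.single i 1))
        + 2 * Gq u (t, x) ((1:ℝ), (0 : Fin n → ℝ)) * Hq u (t, x) ((1:ℝ), (0 : Fin n → ℝ)) ((1:ℝ), (0 : Fin n → ℝ)))) t := by
    refine hasDerivAt_int hK
      (fun s x => (∑ i, (Gq u (s, x) (0, Pi.single i 1))^2) + (Gq u (s, x) ((1:ℝ), (0 : Fin n → ℝ)))^2)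
      (fun s x => (∑ i, 2 * Gq u (s, x) (0, Pi.single i 1) * Hq u (s, x) ((1:ℝ), (0 : Fin n → ℝ)) (0, Pi.single i 1))
        + 2 * Gq u (s, x) ((1:ℝ), (0 : Fin n → ℝ)) * Hq u (s, x) ((1:ℝ), (0 : Fin n → ℝ)) ((1:ℝ), (0 : Fin n → ℝ)))
      ?_ ?_ ?_ ?_ ?_ htI
    · intro τ hτ x
      exact ContinuousAt.add
        (tendsto_finset_sum _ fun i _ => (jG (0, Pi.single i 1) τ hτ x).pow 2)
        ((jG _ τ hτ x).pow 2)
    · intro τ hτ x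
      exact ContinuousAt.add
        (tendsto_finset_sum _ fun i _ =>
          ((continuousAt_const.mul (jG _ τ hτ x)).mul (jH _ _ τ hτ x)))
        ((continuousAt_const.mul (jG _ τ hτ x)).mul (jH _ _ τ hτ x))
    · intro τ hτ x
      have h1 : ∀ c : ℝ × (Fin n → ℝ), HasDerivAt (fun s => (Gq u (s, x) c)^2)
          (2 * Gq u (τ, x) c * Hq u (τ, x) ((1:ℝ), (0 : Fin n → ℝ)) c) τ := by
        intro c
        have := (hasDerivAt_G_apply hreg hτ.1 x c).fun_pow 2
        simpa using this
      exact (HasDerivAt.fun_sum (fun i _ => h1 (0, Pi.single i 1))).add (h1 _)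
    · intro τ hτ x hx
      simp [hG0 τ hτ x hx]
    · intro τ hτ x hx
      simp [hG0 τ hτ x hx, hH0 τ hτ x hx]
  -- derivative of the E3 integral
  have hQ : HasDerivAt
      (fun τ => ∫ x, (Fq u (τ, x) * Gq u (τ, x) ((1:ℝ), (0 : Fin n → ℝ))
        + (μ - 1) * Fq u (τ, x)^2 / (2 * (1 + τ))))
      (∫ x, (Gq u (t, x) ((1:ℝ), (0 : Fin n → ℝ))^2
        + Fq u (t, x) * Hq u (t, x) ((1:ℝ), (0 : Fin n → ℝ)) ((1:ℝ), (0 : Fin n → ℝ))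
        + (μ - 1)/(1 + t) * (Fq u (t, x) * Gq u (t, x) ((1:ℝ), (0 : Fin n → ℝ)))
        - (μ - 1)/(2 * (1 + t)^2) * Fq u (t, x)^2)) t := by
    refine hasDerivAt_int hK
      (fun s x => Fq u (s, x) * Gq u (s, x) ((1:ℝ), (0 : Fin n → ℝ))
        + (μ - 1) * Fq u (s, x)^2 / (2 * (1 + s)))
      (fun s x => Gq u (s, x) ((1:ℝ), (0 : Fin n → ℝ))^2
        + Fq u (s, x) * Hq u (s, x) ((1:ℝ), (0 : Fin n → ℝ)) ((1:ℝ), (0 : Fin n → ℝ))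
        + (μ - 1)/(1 + s) * (Fq u (s, x) * Gq u (s, x) ((1:ℝ), (0 : Fin n → ℝ)))
        - (μ - 1)/(2 * (1 + s)^2) * Fq u (s, x)^2)
      ?_ ?_ ?_ ?_ ?_ htI
    · intro τ hτ x
      have hden : ContinuousAt (fun q : ℝ × (Fin n → ℝ) => 2 * (1 + q.1)) (τ, x) :=
        (continuous_const.mul (continuous_const.add continuous_fst)).continuousAt
      have hdn : 2 * (1 + τ) ≠ 0 := by have := hτ.1; positivity
      exact ((jF τ hτ x).mul (jG _ τ hτ x)).add
        (((continuousAt_const.mul ((jF τ hτ x).pow 2)).div hden hdn))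
    · intro τ hτ x
      have hτ0 := hτ.1
      have hd1 : ContinuousAt (fun q : ℝ × (Fin n → ℝ) => (1:ℝ) + q.1) (τ, x) :=
        (continuous_const.add continuous_fst).continuousAt
      have hd2 : ContinuousAt (fun q : ℝ × (Fin n → ℝ) => 2 * (1 + q.1)^2) (τ, x) :=
        (continuous_const.mul ((continuous_const.add continuous_fst).pow 2)).continuousAt
      have hn1 : (1:ℝ) + τ ≠ 0 := by positivity
      have hn2 : 2 * ((1:ℝ) + τ)^2 ≠ 0 := by positivity
      exact ((((jG _ τ hτ x).pow 2).add ((jF τ hτ x).mul (jH _ _ τ hτ x))).add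
        (((continuousAt_const.div hd1 hn1)).mul ((jF τ hτ x).mul (jG _ τ hτ x)))).sub
        ((continuousAt_const.div hd2 hn2).mul ((jF τ hτ x).pow 2))
    · intro τ hτ x
      have hτ0 := hτ.1
      have hn1 : (1:ℝ) + τ ≠ 0 := by positivity
      have hn2 : 2 * ((1:ℝ) + τ) ≠ 0 := by positivity
      have hFd : HasDerivAt (fun s => Fq u (s, x)) (Gq u (τ, x) ((1:ℝ), (0 : Fin n → ℝ))) τ :=
        hasDerivAt_u hreg hτ.1 x
      have hGd := hasDerivAt_G_apply hreg hτ.1 x ((1:ℝ), (0 : Fin n → ℝ))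
      have h1 := hFd.mul hGd
      have h2 : HasDerivAt (fun s => (μ - 1) * Fq u (s, x)^2)
          ((μ - 1) * (2 * Fq u (τ, x) * Gq u (τ, x) ((1:ℝ), (0 : Fin n → ℝ)))) τ := by
        have := (hFd.pow 2).const_mul (μ - 1)
        simpa using this
      have hden : HasDerivAt (fun s : ℝ => 2 * (1 + s)) 2 τ := by
        simpa using ((hasDerivAt_id τ).const_add 1).const_mul 2
      have h3 := h2.div hden hn2
      have h4 := h1.add h3
      refine h4.congr_deriv ?_
      field_simp
      ring
    · intro τ hτ x hx
      simp [hF0 τ hτ x hx]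
    · intro τ hτ x hx
      simp [hF0 τ hτ x hx, hG0 τ hτ x hx]
  -- transfer to E0 and E3
  have hvPt : ∀ τ ∈ Ioo (0:ℝ) (t+1), E0 u τ =
      1/2 * ∫ x, ((∑ i, (Gq u (τ, x) (0, Pi.single i 1))^2) + (Gq u (τ, x) ((1:ℝ), (0 : Fin n → ℝ)))^2) := by
    intro τ hτ
    rw [E0]
    congr 1
    refine integral_congr_ae (Filter.Eventually.of_forall fun x => ?_)
    simp only [gradSq, pd_eq hreg hτ.1, tderiv_eq hreg hτ.1]
  have hvQt : ∀ τ ∈ Ioo (0:ℝ) (t+1), E3 μ u τ =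
      ∫ x, (Fq u (τ, x) * Gq u (τ, x) ((1:ℝ), (0 : Fin n → ℝ))
        + (μ - 1) * Fq u (τ, x)^2 / (2 * (1 + τ))) := by
    intro τ hτ
    rw [E3]
    refine integral_congr_ae (Filter.Eventually.of_forall fun x => ?_)
    simp only [tderiv_eq hreg hτ.1]
    rfl
  have hE0d : HasDerivAt (fun τ => E0 u τ)
      (1/2 * ∫ x, ((∑ i, 2 * Gq u (t, x) (0, Pi.single i 1) * Hq u (t, x) ((1:ℝ), (0 : Fin n → ℝ)) (0, Pi.single i 1))
        + 2 * Gq u (t, x) ((1:ℝ), (0 : Fin n → ℝ)) * Hq u (t, x) ((1:ℝ), (0 : Fin n → ℝ)) ((1:ℝ), (0 : Fin n → ℝ)))) t := by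
    refine (hP.const_mul (1/2)).congr_of_eventuallyEq ?_
    filter_upwards [isOpen_Ioo.mem_nhds htI] with τ hτ
    rw [hvPt τ hτ, mul_comm]
  have hE3d : HasDerivAt (fun τ => E3 μ u τ)
      (∫ x, (Gq u (t, x) ((1:ℝ), (0 : Fin n → ℝ))^2
        + Fq u (t, x) * Hq u (t, x) ((1:ℝ), (0 : Fin n → ℝ)) ((1:ℝ), (0 : Fin n → ℝ))
        + (μ - 1)/(1 + t) * (Fq u (t, x) * Gq u (t, x) ((1:ℝ), (0 : Fin n → ℝ)))
        - (μ - 1)/(2 * (1 + t)^2) * Fq u (t, x)^2)) t := by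
    refine hQ.congr_of_eventuallyEq ?_
    filter_upwards [isOpen_Ioo.mem_nhds htI] with τ hτ
    exact hvQt τ hτ
  have hdent : HasDerivAt (fun τ : ℝ => 1 + τ) 1 t := by
    simpa using (hasDerivAt_id t).const_add 1
  have hE4d := hE0d.add (hE3d.div hdent hne)
  have hval : 1/2 * (∫ x, ((∑ i, 2 * Gq u (t, x) (0, Pi.single i 1) * Hq u (t, x) ((1:ℝ), (0 : Fin n → ℝ)) (0, Pi.single i 1))
        + 2 * Gq u (t, x) ((1:ℝ), (0 : Fin n → ℝ)) * Hq u (t, x) ((1:ℝ), (0 : Fin n → ℝ)) ((1:ℝ), (0 : Fin n → ℝ))))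
      + ((∫ x, (Gq u (t, x) ((1:ℝ), (0 : Fin n → ℝ))^2
        + Fq u (t, x) * Hq u (t, x) ((1:ℝ), (0 : Fin n → ℝ)) ((1:ℝ), (0 : Fin n → ℝ))
        + (μ - 1)/(1 + t) * (Fq u (t, x) * Gq u (t, x) ((1:ℝ), (0 : Fin n → ℝ)))
        - (μ - 1)/(2 * (1 + t)^2) * Fq u (t, x)^2)) * (1 + t) - E3 μ u t * 1) / (1 + t)^2
      = -((2 / (1 + t)) * E4 μ u t + ((μ - 2) / (1 + t)) * ∫ x, (tderiv u t x) ^ 2) := by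
    -- slice continuity and vanishing at time t
    have cF : Continuous (fun x : Fin n → ℝ => Fq u (t, x)) :=
      continuous_iff_continuousAt.2 fun x =>
        (contAt_F hreg ht x).comp ((Continuous.prodMk_right t).continuousAt)
    have cG : ∀ c, Continuous (fun x : Fin n → ℝ => Gq u (t, x) c) :=
      fun c => continuous_iff_continuousAt.2 fun x =>
        (jG c t htI x).comp ((Continuous.prodMk_right t).continuousAt)
    have cH : ∀ c c', Continuous (fun x : Fin n → ℝ => Hq u (t, x) c c') :=
      fun c c' => continuous_iff_continuousAt.2 fun x =>
        (jH c c' t htI x).comp ((Continuous.prodMk_right t).continuousAt)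
    have zF : ∀ x, x ∉ K → Fq u (t, x) = 0 := hF0 t htI
    have zG : ∀ x, x ∉ K → Gq u (t, x) = 0 := hG0 t htI
    have zH : ∀ x, x ∉ K → Hq u (t, x) = 0 := hH0 t htI
    -- integrability of all the products we need
    have iF2 : Integrable (fun x => Fq u (t, x)^2) :=
      integK hK (cF.pow 2) (fun x hx => by simp [zF x hx])
    have iG2 : ∀ c, Integrable (fun x => Gq u (t, x) c ^ 2) :=
      fun c => integK hK ((cG c).pow 2) (fun x hx => by simp [zG x hx])
    have iFG : ∀ c, Integrable (fun x => Fq u (t, x) * Gq u (t, x) c) :=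
      fun c => integK hK (cF.mul (cG c)) (fun x hx => by simp [zF x hx])
    have iFH : ∀ c c', Integrable (fun x => Fq u (t, x) * Hq u (t, x) c c') :=
      fun c c' => integK hK (cF.mul (cH c c')) (fun x hx => by simp [zF x hx])
    have iGH : ∀ c₀ c c', Integrable (fun x => Gq u (t, x) c₀ * Hq u (t, x) c c') :=
      fun c₀ c c' => integK hK ((cG c₀).mul (cH c c')) (fun x hx => by simp [zG x hx])
    have iGG : ∀ c c', Integrable (fun x => Gq u (t, x) c * Gq u (t, x) c') :=
      fun c c' => integK hK ((cG c).mul (cG c')) (fun x hx => by simp [zG x hx])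
    have iHG : ∀ c c' c₀, Integrable (fun x => Hq u (t, x) c c' * Gq u (t, x) c₀) :=
      fun c c' c₀ => integK hK ((cH c c').mul (cG c₀)) (fun x hx => by simp [zG x hx])
    -- the PDE at time t in terms of G and H
    have hPDE : ∀ x : Fin n → ℝ, Hq u (t, x) ((1:ℝ), (0 : Fin n → ℝ)) ((1:ℝ), (0 : Fin n → ℝ)) =
        (∑ i, Hq u (t, x) (0, Pi.single i 1) (0, Pi.single i 1)) - (μ/(1+t)) * Gq u (t, x) ((1:ℝ), (0 : Fin n → ℝ)) := by
      intro x
      have h := hpde t ht.le x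
      rw [tderiv2_eq hreg ht x, tderiv_eq hreg ht x] at h
      simp only [lap, pd_pd_eq hreg ht] at h
      linarith
    -- integration by parts
    have IBP1 : ∀ i : Fin n, (∫ x, Gq u (t, x) ((1:ℝ), (0 : Fin n → ℝ)) * Hq u (t, x) (0, Pi.single i 1) (0, Pi.single i 1))
        = - ∫ x, Gq u (t, x) (0, Pi.single i 1) * Hq u (t, x) ((1:ℝ), (0 : Fin n → ℝ)) (0, Pi.single i 1) := by
      intro i
      have key := integral_mul_fderiv_eq_neg_fderiv_mul_of_integrable (μ := volume)
        (f := fun y => Gq u (t, y) ((1:ℝ), (0 : Fin n → ℝ))) (g := fun y => Gq u (t, y) (0, Pi.single i 1))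
        (v := Pi.single i 1) ?_ ?_ ?_
        (fun x _ => (hasFDerivAt_G_slice hreg ht x ((1:ℝ), (0 : Fin n → ℝ))).differentiableAt)
        (fun x _ => (hasFDerivAt_G_slice hreg ht x (0, Pi.single i 1)).differentiableAt)
      · simp only [fderiv_G_slice hreg ht] at key
        rw [key]
        congr 1
        refine integral_congr_ae (Filter.Eventually.of_forall fun x => ?_)
        show Hq u (t, x) (0, Pi.single i 1) ((1:ℝ), (0 : Fin n → ℝ)) * Gq u (t, x) (0, Pi.single i 1)
          = Gq u (t, x) (0, Pi.single i 1) * Hq u (t, x) ((1:ℝ), (0 : Fin n → ℝ)) (0, Pi.single i 1)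
        rw [symmH hreg ht x (0, Pi.single i 1) ((1:ℝ), (0 : Fin n → ℝ)), mul_comm]
      · simp only [fderiv_G_slice hreg ht]
        exact iHG _ _ _
      · simp only [fderiv_G_slice hreg ht]
        exact iGH _ _ _
      · exact iGG _ _
    have IBP2 : ∀ i : Fin n, (∫ x, Fq u (t, x) * Hq u (t, x) (0, Pi.single i 1) (0, Pi.single i 1))
        = - ∫ x, Gq u (t, x) (0, Pi.single i 1) * Gq u (t, x) (0, Pi.single i 1) := by
      intro i
      have key := integral_mul_fderiv_eq_neg_fderiv_mul_of_integrable (μ := volume)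
        (f := fun y => Fq u (t, y)) (g := fun y => Gq u (t, y) (0, Pi.single i 1))
        (v := Pi.single i 1) ?_ ?_ ?_
        (fun x _ => (hasFDerivAt_slice hreg ht x).differentiableAt)
        (fun x _ => (hasFDerivAt_G_slice hreg ht x (0, Pi.single i 1)).differentiableAt)
      · simp only [fderiv_G_slice hreg ht, fderiv_F_slice hreg ht] at key
        rw [key]
      · simp only [fderiv_F_slice hreg ht]
        exact iGG _ _
      · simp only [fderiv_G_slice hreg ht]
        exact iFH _ _
      · exact iFG _
    -- helper integrability with leading constants
    have intCGH : ∀ (a : ℝ) (c₀ c c' : ℝ × (Fin n → ℝ)),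
        Integrable (fun x => a * Gq u (t, x) c₀ * Hq u (t, x) c c') :=
      fun a c₀ c c' => integK hK ((continuous_const.mul (cG c₀)).mul (cH c c'))
        (fun x hx => by simp [zG x hx])
    -- value of the E0-derivative integral
    have EP : (∫ x, ((∑ i, 2 * Gq u (t, x) (0, Pi.single i 1) * Hq u (t, x) ((1:ℝ), (0 : Fin n → ℝ)) (0, Pi.single i 1))
          + 2 * Gq u (t, x) ((1:ℝ), (0 : Fin n → ℝ)) * Hq u (t, x) ((1:ℝ), (0 : Fin n → ℝ)) ((1:ℝ), (0 : Fin n → ℝ))))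
        = -(2*μ/(1+t)) * ∫ x, Gq u (t, x) ((1:ℝ), (0 : Fin n → ℝ))^2 := by
      have pt : ∀ x : Fin n → ℝ,
          ((∑ i, 2 * Gq u (t, x) (0, Pi.single i 1) * Hq u (t, x) ((1:ℝ), (0 : Fin n → ℝ)) (0, Pi.single i 1)) + 2 * Gq u (t, x) ((1:ℝ), (0 : Fin n → ℝ)) * Hq u (t, x) ((1:ℝ), (0 : Fin n → ℝ)) ((1:ℝ), (0 : Fin n → ℝ)))
          = (∑ i, (2 * Gq u (t, x) (0, Pi.single i 1) * Hq u (t, x) ((1:ℝ), (0 : Fin n → ℝ)) (0, Pi.single i 1) + 2 * Gq u (t, x) ((1:ℝ), (0 : Fin n → ℝ)) * Hq u (t, x) (0, Pi.single i 1) (0, Pi.single i 1)))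
            + (-(2*μ/(1+t))) * Gq u (t, x) ((1:ℝ), (0 : Fin n → ℝ))^2 := by
        intro x
        rw [hPDE x, mul_sub, Finset.mul_sum, Finset.sum_add_distrib]
        ring
      rw [show (fun x => ((∑ i, 2 * Gq u (t, x) (0, Pi.single i 1) * Hq u (t, x) ((1:ℝ), (0 : Fin n → ℝ)) (0, Pi.single i 1)) + 2 * Gq u (t, x) ((1:ℝ), (0 : Fin n → ℝ)) * Hq u (t, x) ((1:ℝ), (0 : Fin n → ℝ)) ((1:ℝ), (0 : Fin n → ℝ))))
          = (fun x => (∑ i, (2 * Gq u (t, x) (0, Pi.single i 1) * Hq u (t, x) ((1:ℝ), (0 : Fin n → ℝ)) (0, Pi.single i 1) + 2 * Gq u (t, x) ((1:ℝ), (0 : Fin n → ℝ)) * Hq u (t, x) (0, Pi.single i 1) (0, Pi.single i 1)))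
            + (-(2*μ/(1+t))) * Gq u (t, x) ((1:ℝ), (0 : Fin n → ℝ))^2) from funext pt]
      have iterm : ∀ i : Fin n, Integrable (fun x => 2 * Gq u (t, x) (0, Pi.single i 1) * Hq u (t, x) ((1:ℝ), (0 : Fin n → ℝ)) (0, Pi.single i 1) + 2 * Gq u (t, x) ((1:ℝ), (0 : Fin n → ℝ)) * Hq u (t, x) (0, Pi.single i 1) (0, Pi.single i 1)) :=
        fun i => integK hK
          (((continuous_const.mul (cG _)).mul (cH _ _)).add
            ((continuous_const.mul (cG _)).mul (cH _ _)))
          (fun x hx => by simp [zG x hx])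
      have iSum : Integrable (fun x => ∑ i : Fin n, (2 * Gq u (t, x) (0, Pi.single i 1) * Hq u (t, x) ((1:ℝ), (0 : Fin n → ℝ)) (0, Pi.single i 1) + 2 * Gq u (t, x) ((1:ℝ), (0 : Fin n → ℝ)) * Hq u (t, x) (0, Pi.single i 1) (0, Pi.single i 1))) :=
        integrable_finset_sum _ fun i _ => iterm i
      have iLast : Integrable (fun x => -(2*μ/(1+t)) * Gq u (t, x) ((1:ℝ), (0 : Fin n → ℝ))^2) := (iG2 _).const_mul _
      rw [integral_add iSum iLast, integral_finset_sum _ (fun i _ => iterm i),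
        integral_const_mul _ _]
      have hzero : ∀ i : Fin n, (∫ x, (2 * Gq u (t, x) (0, Pi.single i 1) * Hq u (t, x) ((1:ℝ), (0 : Fin n → ℝ)) (0, Pi.single i 1) + 2 * Gq u (t, x) ((1:ℝ), (0 : Fin n → ℝ)) * Hq u (t, x) (0, Pi.single i 1) (0, Pi.single i 1))) = 0 := by
        intro i
        rw [integral_add (intCGH 2 _ _ _) (intCGH 2 _ _ _)]
        have e1 : (∫ x, 2 * Gq u (t, x) (0, Pi.single i 1) * Hq u (t, x) ((1:ℝ), (0 : Fin n → ℝ)) (0, Pi.single i 1)) = 2 * ∫ x, Gq u (t, x) (0, Pi.single i 1) * Hq u (t, x) ((1:ℝ), (0 : Fin n → ℝ)) (0, Pi.single i 1) := by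
          rw [show (fun x => 2 * Gq u (t, x) (0, Pi.single i 1) * Hq u (t, x) ((1:ℝ), (0 : Fin n → ℝ)) (0, Pi.single i 1)) = (fun x => 2 * (Gq u (t, x) (0, Pi.single i 1) * Hq u (t, x) ((1:ℝ), (0 : Fin n → ℝ)) (0, Pi.single i 1)))
            from funext fun x => mul_assoc _ _ _, integral_const_mul _ _]
        have e2 : (∫ x, 2 * Gq u (t, x) ((1:ℝ), (0 : Fin n → ℝ)) * Hq u (t, x) (0, Pi.single i 1) (0, Pi.single i 1)) = 2 * ∫ x, Gq u (t, x) ((1:ℝ), (0 : Fin n → ℝ)) * Hq u (t, x) (0, Pi.single i 1) (0, Pi.single i 1) := by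
          rw [show (fun x => 2 * Gq u (t, x) ((1:ℝ), (0 : Fin n → ℝ)) * Hq u (t, x) (0, Pi.single i 1) (0, Pi.single i 1)) = (fun x => 2 * (Gq u (t, x) ((1:ℝ), (0 : Fin n → ℝ)) * Hq u (t, x) (0, Pi.single i 1) (0, Pi.single i 1)))
            from funext fun x => mul_assoc _ _ _, integral_const_mul _ _]
        rw [e1, e2, IBP1 i]
        ring
      rw [Finset.sum_eq_zero (fun i _ => hzero i)]
      ring
    -- value of the E3-derivative integral
    have EQ : (∫ x, (Gq u (t, x) ((1:ℝ), (0 : Fin n → ℝ))^2 + Fq u (t, x) * Hq u (t, x) ((1:ℝ), (0 : Fin n → ℝ)) ((1:ℝ), (0 : Fin n → ℝ))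
          + (μ - 1)/(1 + t) * (Fq u (t, x) * Gq u (t, x) ((1:ℝ), (0 : Fin n → ℝ)))
          - (μ - 1)/(2 * (1 + t)^2) * Fq u (t, x)^2))
        = (-(∑ i, ∫ x, Gq u (t, x) (0, Pi.single i 1)^2)) + ((∫ x, Gq u (t, x) ((1:ℝ), (0 : Fin n → ℝ))^2)
            + ((μ - 1)/(1 + t)) * (∫ x, Fq u (t, x) * Gq u (t, x) ((1:ℝ), (0 : Fin n → ℝ)))
            - (μ/(1+t)) * (∫ x, Fq u (t, x) * Gq u (t, x) ((1:ℝ), (0 : Fin n → ℝ)))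
            - ((μ - 1)/(2 * (1 + t)^2)) * (∫ x, Fq u (t, x)^2)) := by
      have pt : ∀ x : Fin n → ℝ,
          (Gq u (t, x) ((1:ℝ), (0 : Fin n → ℝ))^2 + Fq u (t, x) * Hq u (t, x) ((1:ℝ), (0 : Fin n → ℝ)) ((1:ℝ), (0 : Fin n → ℝ))
            + (μ - 1)/(1 + t) * (Fq u (t, x) * Gq u (t, x) ((1:ℝ), (0 : Fin n → ℝ)))
            - (μ - 1)/(2 * (1 + t)^2) * Fq u (t, x)^2)
          = (∑ i, Fq u (t, x) * Hq u (t, x) (0, Pi.single i 1) (0, Pi.single i 1))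
            + (Gq u (t, x) ((1:ℝ), (0 : Fin n → ℝ))^2 + ((μ - 1)/(1 + t)) * (Fq u (t, x) * Gq u (t, x) ((1:ℝ), (0 : Fin n → ℝ)))
              - (μ/(1+t)) * (Fq u (t, x) * Gq u (t, x) ((1:ℝ), (0 : Fin n → ℝ)))
              - ((μ - 1)/(2 * (1 + t)^2)) * Fq u (t, x)^2) := by
        intro x
        rw [hPDE x, mul_sub, Finset.mul_sum]
        ring
      rw [show (fun x => (Gq u (t, x) ((1:ℝ), (0 : Fin n → ℝ))^2 + Fq u (t, x) * Hq u (t, x) ((1:ℝ), (0 : Fin n → ℝ)) ((1:ℝ), (0 : Fin n → ℝ))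
            + (μ - 1)/(1 + t) * (Fq u (t, x) * Gq u (t, x) ((1:ℝ), (0 : Fin n → ℝ)))
            - (μ - 1)/(2 * (1 + t)^2) * Fq u (t, x)^2))
          = (fun x => (∑ i, Fq u (t, x) * Hq u (t, x) (0, Pi.single i 1) (0, Pi.single i 1))
            + (Gq u (t, x) ((1:ℝ), (0 : Fin n → ℝ))^2 + ((μ - 1)/(1 + t)) * (Fq u (t, x) * Gq u (t, x) ((1:ℝ), (0 : Fin n → ℝ)))
              - (μ/(1+t)) * (Fq u (t, x) * Gq u (t, x) ((1:ℝ), (0 : Fin n → ℝ)))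
              - ((μ - 1)/(2 * (1 + t)^2)) * Fq u (t, x)^2)) from funext pt]
      have irest : Integrable (fun x => Gq u (t, x) ((1:ℝ), (0 : Fin n → ℝ))^2 + ((μ - 1)/(1 + t)) * (Fq u (t, x) * Gq u (t, x) ((1:ℝ), (0 : Fin n → ℝ)))
          - (μ/(1+t)) * (Fq u (t, x) * Gq u (t, x) ((1:ℝ), (0 : Fin n → ℝ))) - ((μ - 1)/(2 * (1 + t)^2)) * Fq u (t, x)^2) :=
        integK hK
          ((((cG _).pow 2).add (continuous_const.mul (cF.mul (cG _)))
            |>.sub (continuous_const.mul (cF.mul (cG _)))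
            |>.sub (continuous_const.mul (cF.pow 2))))
          (fun x hx => by simp [zG x hx, zF x hx])
      have irest1 : Integrable (fun x => Gq u (t, x) ((1:ℝ), (0 : Fin n → ℝ))^2 + ((μ - 1)/(1 + t)) * (Fq u (t, x) * Gq u (t, x) ((1:ℝ), (0 : Fin n → ℝ)))
          - (μ/(1+t)) * (Fq u (t, x) * Gq u (t, x) ((1:ℝ), (0 : Fin n → ℝ)))) :=
        integK hK
          ((((cG _).pow 2).add (continuous_const.mul (cF.mul (cG _)))
            |>.sub (continuous_const.mul (cF.mul (cG _)))))
          (fun x hx => by simp [zG x hx, zF x hx])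
      have irest2 : Integrable (fun x => Gq u (t, x) ((1:ℝ), (0 : Fin n → ℝ))^2 + ((μ - 1)/(1 + t)) * (Fq u (t, x) * Gq u (t, x) ((1:ℝ), (0 : Fin n → ℝ)))) :=
        integK hK
          (((cG _).pow 2).add (continuous_const.mul (cF.mul (cG _))))
          (fun x hx => by simp [zG x hx, zF x hx])
      rw [integral_add (integrable_finset_sum _ fun i _ => iFH _ _) irest,
        integral_finset_sum _ (fun i _ => iFH _ _)]
      have hterm : ∀ i : Fin n, (∫ x, Fq u (t, x) * Hq u (t, x) (0, Pi.single i 1) (0, Pi.single i 1)) = -(∫ x, Gq u (t, x) (0, Pi.single i 1)^2) := by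
        intro i
        rw [IBP2 i]
        congr 1
        refine integral_congr_ae (Filter.Eventually.of_forall fun x => ?_)
        show Gq u (t, x) (0, Pi.single i 1) * Gq u (t, x) (0, Pi.single i 1) = Gq u (t, x) (0, Pi.single i 1)^2
        rw [pow_two]
      rw [Finset.sum_congr rfl (fun i _ => hterm i), Finset.sum_neg_distrib]
      congr 1
      rw [integral_sub irest1 (iF2.const_mul _),
        integral_sub irest2 ((iFG _).const_mul _),
        integral_add (iG2 _) ((iFG _).const_mul _),
        integral_const_mul _ _, integral_const_mul _ _, integral_const_mul _ _]
    -- values of E0, E3 and the tderiv integral at time t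
    have EE0 : E0 u t = 1/2 * ((∑ i, ∫ x, Gq u (t, x) (0, Pi.single i 1)^2) + ∫ x, Gq u (t, x) ((1:ℝ), (0 : Fin n → ℝ))^2) := by
      rw [hvPt t htI, integral_add (integrable_finset_sum _ fun i _ => iG2 _) (iG2 _),
        integral_finset_sum _ (fun i _ => iG2 _)]
    have EE3 : E3 μ u t = (∫ x, Fq u (t, x) * Gq u (t, x) ((1:ℝ), (0 : Fin n → ℝ)))
        + ((μ - 1)/(2 * (1 + t))) * (∫ x, Fq u (t, x)^2) := by
      rw [hvQt t htI]
      rw [show (fun x => Fq u (t, x) * Gq u (t, x) ((1:ℝ), (0 : Fin n → ℝ)) + (μ - 1) * Fq u (t, x)^2 / (2 * (1 + t)))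
          = (fun x => Fq u (t, x) * Gq u (t, x) ((1:ℝ), (0 : Fin n → ℝ)) + ((μ - 1)/(2 * (1 + t))) * Fq u (t, x)^2)
          from funext fun x => by ring]
      rw [integral_add (iFG _) (iF2.const_mul _), integral_const_mul _ _]
    have Etd : (∫ x, (tderiv u t x)^2) = ∫ x, Gq u (t, x) ((1:ℝ), (0 : Fin n → ℝ))^2 :=
      integral_congr_ae (Filter.Eventually.of_forall fun x => by
        simp only [tderiv_eq hreg ht])
    rw [EP, EQ, EE3, Etd]
    simp only [E4]
    rw [EE0, EE3]
    field_simp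
    ring

  rw [← hval]
  exact hE4d
end
end

section
/- Let n ≥ 1, μ = 2, η ∈ (0,2), and let u be a classical compactly supported solution of the linear damped wave equation ∂_t²u − Δu + (2/(1+t))∂_t u = 0 on [0,∞) × ℝⁿ. Define E₀(t) := (1/2)∫_{ℝⁿ}( |∇_x u|² + (∂_t u)² ) dx, E₅(t) := ∫_{ℝⁿ}( u ∂_t u + (1+η) u²/(2(1+t)) ) dx, and E₆(t) := E₀(t) + ((2−η)/(2(1+t))) E₅(t). Then E₆ is differentiable on (0,∞) and satisfies, for all t > 0: d/dt E₆(t) + ((2−η)/(1+t)) E₆(t) + (η(1+η)(2−η)/(4(1+t)³)) ∫_{ℝⁿ} u(t,x)² dx + (η/(1+t)) ∫_{ℝⁿ} (∂_t u(t,x))² dx = 0. -/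
open MeasureTheory Real Set

noncomputable section

/-- The functional `E₅(t) = ∫ ( u ∂ₜu + (1+η) u²/(2(1+t)) ) dx`. -/
def E5 {n : ℕ} (η : ℝ) (u : ℝ → (Fin n → ℝ) → ℝ) (t : ℝ) : ℝ :=
  ∫ x, (u t x * tderiv u t x + (1 + η) * (u t x) ^ 2 / (2 * (1 + t)))

/-- `E₆(t) = E₀(t) + ((2−η)/(2(1+t))) E₅(t)`. -/
def E6 {n : ℕ} (η : ℝ) (u : ℝ → (Fin n → ℝ) → ℝ) (t : ℝ) : ℝ :=
  E0 u t + ((2 - η) / (2 * (1 + t))) * E5 η u t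

namespace DWE1
variable {n : ℕ}

/-- The open half-space of positive times. -/
def Omg (n : ℕ) : Set (ℝ × (Fin n → ℝ)) := Set.Ioi (0:ℝ) ×ˢ (Set.univ : Set (Fin n → ℝ))

lemma isOpen_Omg : IsOpen (Omg n) := isOpen_Ioi.prod isOpen_univ

lemma mem_Omg {q : ℝ × (Fin n → ℝ)} : q ∈ Omg n ↔ 0 < q.1 := by
  simp [Omg]

lemma integrable_of_supp {f : (Fin n → ℝ) → ℝ} {K : Set (Fin n → ℝ)} (hK : IsCompact K)
    (hc : Continuous f) (h0 : ∀ x ∉ K, f x = 0) : Integrable f :=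
  hc.integrable_of_hasCompactSupport (HasCompactSupport.intro hK h0)

lemma cont_slice {E : Type*} [TopologicalSpace E] {F : ℝ × (Fin n → ℝ) → E}
    (hFc : ContinuousOn F (Omg n)) {τ : ℝ}
    (hτ : 0 < τ) : Continuous fun x => F (τ, x) := by
  refine continuous_iff_continuousAt.2 fun x => ?_
  have h1 : ContinuousAt F (τ, x) :=
    hFc.continuousAt (isOpen_Omg.mem_nhds (mem_Omg.2 hτ))
  exact h1.comp ((continuous_const.prodMk continuous_id).continuousAt)

lemma deriv_under_integral {F F' : ℝ × (Fin n → ℝ) → ℝ} {t : ℝ} (ht : 0 < t)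
    {K : Set (Fin n → ℝ)} (hK : IsCompact K)
    (hFc : ContinuousOn F (Omg n)) (hF'c : ContinuousOn F' (Omg n))
    (hd : ∀ τ, 0 < τ → ∀ x, HasDerivAt (fun s => F (s, x)) (F' (τ, x)) τ)
    (hFsupp : ∀ τ, 0 < τ → τ < t + 1 → ∀ x ∉ K, F (τ, x) = 0)
    (hF'supp : ∀ τ, 0 < τ → τ < t + 1 → ∀ x ∉ K, F' (τ, x) = 0) :
    HasDerivAt (fun τ => ∫ x, F (τ, x)) (∫ x, F' (t, x)) t := by
  set ε : ℝ := min t 1 / 2 with hε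
  have hε0 : 0 < ε := by positivity
  have hεt : ε < t := by
    have : min t 1 ≤ t := min_le_left _ _
    have h1 : 0 < min t 1 := lt_min ht one_pos
    nlinarith
  have hε1 : ε < 1 := by
    have : min t 1 ≤ 1 := min_le_right _ _
    nlinarith [hε0]
  have hball : ∀ τ ∈ Metric.ball t ε, 0 < τ ∧ τ < t + 1 := by
    intro τ hτ
    rw [Metric.mem_ball, Real.dist_eq, abs_lt] at hτ
    constructor <;> nlinarith [hτ.1, hτ.2]
  -- compact set in space-time
  have hScomp : IsCompact ((Set.Icc (t - ε) (t + ε)) ×ˢ K) := isCompact_Icc.prod hK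
  have hSsub : (Set.Icc (t - ε) (t + ε)) ×ˢ K ⊆ Omg n := by
    rintro ⟨τ, x⟩ ⟨hτ, -⟩
    exact mem_Omg.2 (by have := hτ.1; simp at this ⊢; linarith)
  obtain ⟨C, hC⟩ := hScomp.exists_bound_of_continuousOn (hF'c.mono hSsub)
  set bound : (Fin n → ℝ) → ℝ := K.indicator fun _ => max C 0 with hbound
  have hbound_int : Integrable bound := by
    rw [hbound, integrable_indicator_iff hK.measurableSet]
    exact integrableOn_const hK.measure_lt_top.ne
  have key := hasDerivAt_integral_of_dominated_loc_of_deriv_le (μ := volume)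
      (F := fun τ x => F (τ, x)) (F' := fun τ x => F' (τ, x)) (bound := bound) (x₀ := t) (s := Metric.ball t ε) (Metric.ball_mem_nhds t hε0)
      ?_ ?_ ?_ ?_ hbound_int ?_
  · exact key.2
  · -- measurability of F τ near t
    filter_upwards [Metric.ball_mem_nhds t hε0] with τ hτ
    exact (cont_slice hFc (hball τ hτ).1).aestronglyMeasurable
  · -- integrability of F t
    exact integrable_of_supp hK (cont_slice hFc ht) (hFsupp t ht (by linarith))
  · exact (cont_slice hF'c ht).aestronglyMeasurable
  · -- bound
    refine Filter.Eventually.of_forall fun x => fun τ hτ => ?_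
    obtain ⟨hτ0, hτ1⟩ := hball τ hτ
    by_cases hx : x ∈ K
    · have hmem : (τ, x) ∈ (Set.Icc (t - ε) (t + ε)) ×ˢ K := by
        refine ⟨?_, hx⟩
        rw [Metric.mem_ball, Real.dist_eq, abs_lt] at hτ
        constructor <;> simp <;> linarith [hτ.1, hτ.2]
      calc ‖F' (τ, x)‖ ≤ C := hC _ hmem
        _ ≤ max C 0 := le_max_left _ _
        _ = bound x := by rw [hbound, Set.indicator_of_mem hx]
    · have : F' (τ, x) = 0 := hF'supp τ hτ0 hτ1 x hx
      simp only [this, hbound, Set.indicator_of_notMem hx, norm_zero, le_refl]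
  · -- differentiability
    refine Filter.Eventually.of_forall fun x => fun τ hτ => hd τ (hball τ hτ).1 x


/-- Integration by parts / divergence theorem for compactly supported C¹ functions:
the integral of `∂ᵢ f` over `ℝⁿ⁺¹` vanishes. -/
lemma integral_pd_eq_zero {m : ℕ} {f : (Fin (m+1) → ℝ) → ℝ}
    {f' : (Fin (m+1) → ℝ) → ((Fin (m+1) → ℝ) →L[ℝ] ℝ)}
    (hd : ∀ x, HasFDerivAt f (f' x) x) (hf'c : Continuous f')
    {K : Set (Fin (m+1) → ℝ)} (hK : IsCompact K) (h0 : ∀ x ∉ K, f x = 0)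
    (i : Fin (m+1)) : ∫ x, f' x (Pi.single i 1) = 0 := by
  -- f' vanishes off K
  have hf'0 : ∀ x ∉ K, f' x = 0 := by
    intro x hx
    have hev : f =ᶠ[nhds x] fun _ => (0:ℝ) := by
      filter_upwards [hK.isClosed.isOpen_compl.mem_nhds hx] with y hy using h0 y hy
    have h1 : fderiv ℝ f x = 0 := by
      rw [Filter.EventuallyEq.fderiv_eq hev]
      simp
    rw [← (hd x).fderiv, h1]
  -- bounding box
  obtain ⟨R, hR0, hRK⟩ : ∃ R, 0 < R ∧ K ⊆ Metric.closedBall 0 R := by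
    obtain ⟨R, hRK⟩ := hK.isBounded.subset_closedBall 0
    exact ⟨max R 1, by positivity, hRK.trans (Metric.closedBall_subset_closedBall (le_max_left _ _))⟩
  set a : Fin (m+1) → ℝ := fun _ => -(R+1) with ha
  set b : Fin (m+1) → ℝ := fun _ => (R+1) with hb
  have hKcoord : ∀ x ∈ K, ∀ j, |x j| ≤ R := by
    intro x hx j
    have := hRK hx
    rw [Metric.mem_closedBall, dist_zero_right] at this
    calc |x j| = ‖x j‖ := rfl
      _ ≤ ‖x‖ := norm_le_pi_norm x j
      _ ≤ R := this
  have hle : a ≤ b := fun j => by simp [ha, hb]; linarith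
  -- apply the divergence theorem to the family which is `f` in slot `i` and `0` elsewhere
  have := MeasureTheory.integral_divergence_of_hasFDerivAt_off_countable' a b hle
    (fun j => if j = i then f else 0)
    (fun j => if j = i then f' else 0) ∅ Set.countable_empty
    (fun j => by
      by_cases h : j = i <;> simp [h]
      · exact fun x _ => ((hd x).continuousAt).continuousWithinAt
      · exact continuousOn_const)
    (fun x _ j => by
      by_cases h : j = i <;> simp [h]
      · exact hd x
      · exact hasFDerivAt_const 0 x)
    (by
      have : ContinuousOn (fun x => ∑ j, (if j = i then f' else 0) x (Pi.single j 1))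
          (Set.Icc a b) := by
        refine continuousOn_finset_sum _ fun j _ => ?_
        by_cases h : j = i <;> simp [h]
        · exact (hf'c.clm_apply continuous_const).continuousOn
        · exact continuousOn_const
      exact this.integrableOn_compact isCompact_Icc)
  -- simplify both sides
  have hnotK : ∀ x : Fin (m+1) → ℝ, (∃ j, R < |x j|) → x ∉ K := by
    rintro x ⟨j, hj⟩ hx
    exact absurd (hKcoord x hx j) (not_le.2 hj)
  have hLHS : (∫ x in Set.Icc a b, ∑ j, (if j = i then f' else 0) x (Pi.single j 1))
      = ∫ x, f' x (Pi.single i 1) := by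
    have h1 : ∀ x : Fin (m+1) → ℝ, (∑ j, (if j = i then f' else 0) x (Pi.single j 1))
        = f' x (Pi.single i 1) := by
      intro x
      rw [Finset.sum_eq_single i]
      · simp
      · intro j _ hj; simp [hj]
      · intro h; exact absurd (Finset.mem_univ i) h
    simp only [h1]
    apply setIntegral_eq_integral_of_forall_compl_eq_zero
    intro x hx
    have : ∃ j, R < |x j| := by
      by_contra hcon
      push_neg at hcon
      exact hx ⟨fun j => by simp [ha]; nlinarith [abs_le.1 (hcon j)],
        fun j => by simp [hb]; nlinarith [abs_le.1 (hcon j)]⟩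
    rw [hf'0 x (hnotK x this)]
    rfl
  have hRHS : ∀ j : Fin (m+1),
      ((∫ x in Set.Icc (a ∘ j.succAbove) (b ∘ j.succAbove),
          (if j = i then f else 0) (j.insertNth (b j) x)) -
        ∫ x in Set.Icc (a ∘ j.succAbove) (b ∘ j.succAbove),
          (if j = i then f else 0) (j.insertNth (a j) x)) = 0 := by
    intro j
    by_cases h : j = i
    · subst h
      simp only [if_pos rfl]
      have h1 : ∀ (c : ℝ), R < |c| → ∀ x : Fin m → ℝ, f (j.insertNth c x) = 0 := by
        intro c hc x
        apply h0
        apply hnotK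
        exact ⟨j, by rwa [Fin.insertNth_apply_same]⟩
      have hbgt : R < |b j| := by simp [hb]; rw [abs_of_pos] <;> linarith
      have hagt : R < |a j| := by simp [ha]; rw [abs_of_neg] <;> linarith
      simp only [h1 (b j) hbgt, h1 (a j) hagt, integral_zero, sub_self, if_true]
    · simp [h]
  rw [hLHS] at this
  rw [this, Finset.sum_eq_zero fun j _ => hRHS j]


end DWE1

set_option maxHeartbeats 2000000 in
open DWE1 in
theorem statement10 (n : ℕ) (hn : 1 ≤ n) (η : ℝ) (hη0 : 0 < η) (hη2 : η < 2)
    (u : ℝ → (Fin n → ℝ) → ℝ) (hu : IsSol n 2 u) :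
    ∀ t : ℝ, 0 < t →
      HasDerivAt (fun τ => E6 η u τ)
        (-(((2 - η) / (1 + t)) * E6 η u t
          + (η * (1 + η) * (2 - η) / (4 * (1 + t) ^ 3)) * (∫ x, (u t x) ^ 2)
          + (η / (1 + t)) * ∫ x, (tderiv u t x) ^ 2)) t := by
  obtain ⟨m, rfl⟩ : ∃ m, n = m + 1 := ⟨n - 1, by omega⟩
  intro t ht
  obtain ⟨hC2, hEq, hKex⟩ := hu
  obtain ⟨K, hK, hKsupp⟩ := hKex (t + 1) (by linarith)
  have h1t : (0:ℝ) < 1 + t := by linarith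
  -- basic smoothness setup
  set U : ℝ × (Fin (m+1) → ℝ) → ℝ := fun q => u q.1 q.2 with hUdef
  have hsub : Omg (m+1) ⊆ (Set.Ici (0:ℝ)) ×ˢ (Set.univ : Set (Fin (m+1) → ℝ)) := by
    rintro ⟨τ, x⟩ hq
    exact ⟨le_of_lt (mem_Omg.1 hq), trivial⟩
  have hC2' : ContDiffOn ℝ 2 U (Omg (m+1)) := hC2.mono hsub
  have hCAt : ∀ q ∈ Omg (m+1), ContDiffAt ℝ 2 U q :=
    fun q hq => hC2'.contDiffAt (isOpen_Omg.mem_nhds hq)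
  set G := fderiv ℝ U with hGdef
  set H := fderiv ℝ G with hHdef
  have hG1 : ContDiffOn ℝ 1 G (Omg (m+1)) :=
    hC2'.fderiv_of_isOpen isOpen_Omg (by norm_num)
  have hGc : ContinuousOn G (Omg (m+1)) := hG1.continuousOn
  have hHc : ContinuousOn H (Omg (m+1)) :=
    hG1.continuousOn_fderiv_of_isOpen isOpen_Omg le_rfl
  have hUd : ∀ q ∈ Omg (m+1), HasFDerivAt U (G q) q := fun q hq =>
    ((hCAt q hq).differentiableAt two_ne_zero).hasFDerivAt
  have hGd : ∀ q ∈ Omg (m+1), HasFDerivAt G (H q) q := fun q hq =>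
    ((hG1.contDiffAt (isOpen_Omg.mem_nhds hq)).differentiableAt one_ne_zero).hasFDerivAt
  have hsymm : ∀ q ∈ Omg (m+1), ∀ v w, H q v w = H q w v := fun q hq =>
    (hCAt q hq).isSymmSndFDerivAt minSmoothness_of_isRCLikeNormedField.le
  have hcurve : ∀ (x : Fin (m+1) → ℝ) (τ : ℝ),
      HasDerivAt (fun s : ℝ => (s, x)) ((1:ℝ), (0 : Fin (m+1) → ℝ)) τ :=
    fun x τ => (hasDerivAt_id τ).prodMk (hasDerivAt_const τ x)
  -- pointwise derivative identities
  have F1 : ∀ τ, 0 < τ → ∀ x, HasDerivAt (fun s => u s x) (G (τ, x) (1, 0)) τ :=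
    fun τ hτ x => by have := (hUd (τ, x) (mem_Omg.2 hτ)).comp_hasDerivAt τ (hcurve x τ); exact this
  have F2 : ∀ τ, 0 < τ → ∀ x, tderiv u τ x = G (τ, x) (1, 0) :=
    fun τ hτ x => (F1 τ hτ x).deriv
  have F3 : ∀ τ, 0 < τ → ∀ x, HasFDerivAt (u τ)
      ((G (τ, x)).comp (ContinuousLinearMap.inr ℝ ℝ (Fin (m+1) → ℝ))) x :=
    fun τ hτ x => (hUd (τ, x) (mem_Omg.2 hτ)).comp x (hasFDerivAt_prodMk_right τ x)
  have F4 : ∀ τ, 0 < τ → ∀ x i, pd i (u τ) x = G (τ, x) (0, Pi.single i 1) := by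
    intro τ hτ x i
    rw [pd, (F3 τ hτ x).fderiv]
    rfl
  have F5 : ∀ v : ℝ × (Fin (m+1) → ℝ), ∀ τ, 0 < τ → ∀ x,
      HasDerivAt (fun s => G (s, x) v) (H (τ, x) (1, 0) v) τ := by
    intro v τ hτ x
    have h1 : HasDerivAt (fun s => G (s, x)) (H (τ, x) (1, 0)) τ :=
      (hGd (τ, x) (mem_Omg.2 hτ)).comp_hasDerivAt τ (hcurve x τ)
    simpa using h1.clm_apply (hasDerivAt_const τ v)
  have F6 : ∀ τ, 0 < τ → ∀ x,
      HasDerivAt (fun s => tderiv u s x) (H (τ, x) (1, 0) (1, 0)) τ := by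
    intro τ hτ x
    refine (F5 (1, 0) τ hτ x).congr_of_eventuallyEq ?_
    filter_upwards [eventually_gt_nhds hτ] with s hs using F2 s hs x
  have F7 : ∀ τ, 0 < τ → ∀ x, tderiv2 u τ x = H (τ, x) (1, 0) (1, 0) :=
    fun τ hτ x => (F6 τ hτ x).deriv
  -- spatial derivatives of slices of G
  have F8 : ∀ v : ℝ × (Fin (m+1) → ℝ), ∀ τ, 0 < τ → ∀ x,
      HasFDerivAt (fun y => G (τ, y) v)
        ((ContinuousLinearMap.apply ℝ ℝ v).comp
          ((H (τ, x)).comp (ContinuousLinearMap.inr ℝ ℝ (Fin (m+1) → ℝ)))) x := by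
    intro v τ hτ x
    have h1 : HasFDerivAt (fun y => G (τ, y))
        ((H (τ, x)).comp (ContinuousLinearMap.inr ℝ ℝ (Fin (m+1) → ℝ))) x :=
      (hGd (τ, x) (mem_Omg.2 hτ)).comp x (hasFDerivAt_prodMk_right τ x)
    have h2 := h1.clm_apply (hasFDerivAt_const v x)
    have h3 : ((fun y => G (τ, y)) x).comp (0 : (Fin (m+1) → ℝ) →L[ℝ] ℝ × (Fin (m+1) → ℝ))
        + ((H (τ, x)).comp (ContinuousLinearMap.inr ℝ ℝ (Fin (m+1) → ℝ))).flip v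
        = (ContinuousLinearMap.apply ℝ ℝ v).comp
          ((H (τ, x)).comp (ContinuousLinearMap.inr ℝ ℝ (Fin (m+1) → ℝ))) := by
      ext w
      simp
    rwa [h3] at h2
  have F9 : ∀ v : ℝ × (Fin (m+1) → ℝ), ∀ τ, 0 < τ → ∀ x i,
      pd i (fun y => G (τ, y) v) x = H (τ, x) (0, Pi.single i 1) v := by
    intro v τ hτ x i
    rw [pd, (F8 v τ hτ x).fderiv]
    rfl
  have hlap : ∀ τ, 0 < τ → ∀ x,
      lap (u τ) x = ∑ i, H (τ, x) (0, Pi.single i 1) (0, Pi.single i 1) := by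
    intro τ hτ x
    rw [lap]
    refine Finset.sum_congr rfl fun i _ => ?_
    have h1 : pd i (u τ) = fun y => G (τ, y) (0, Pi.single i 1) :=
      funext fun y => F4 τ hτ y i
    rw [h1, F9 _ τ hτ x i]
  -- the PDE in terms of G and H
  have hPDE : ∀ τ, 0 < τ → ∀ x, H (τ, x) (1, 0) (1, 0)
      = (∑ i, H (τ, x) (0, Pi.single i 1) (0, Pi.single i 1))
        - (2 / (1 + τ)) * G (τ, x) (1, 0) := by
    intro τ hτ x
    have h1 := hEq τ hτ.le x
    rw [F7 τ hτ x, hlap τ hτ x, F2 τ hτ x] at h1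
    linarith
  -- support facts
  have hVopen : IsOpen ((Set.Ioo (0:ℝ) (t+1)) ×ˢ (Kᶜ : Set (Fin (m+1) → ℝ))) :=
    isOpen_Ioo.prod hK.isClosed.isOpen_compl
  have hV0 : ∀ q ∈ (Set.Ioo (0:ℝ) (t+1)) ×ˢ (Kᶜ : Set (Fin (m+1) → ℝ)), U q = 0 := by
    rintro ⟨τ, x⟩ ⟨hτ, hx⟩
    exact hKsupp τ ⟨hτ.1.le, hτ.2.le⟩ x hx
  have hG0 : ∀ q ∈ (Set.Ioo (0:ℝ) (t+1)) ×ˢ (Kᶜ : Set (Fin (m+1) → ℝ)), G q = 0 := by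
    intro q hq
    have hev : U =ᶠ[nhds q] fun _ => (0:ℝ) := by
      filter_upwards [hVopen.mem_nhds hq] with p hp using hV0 p hp
    rw [hGdef, Filter.EventuallyEq.fderiv_eq hev]
    simp
  have hH0 : ∀ q ∈ (Set.Ioo (0:ℝ) (t+1)) ×ˢ (Kᶜ : Set (Fin (m+1) → ℝ)), H q = 0 := by
    intro q hq
    have hev : G =ᶠ[nhds q] fun _ => (0 : ℝ × (Fin (m+1) → ℝ) →L[ℝ] ℝ) := by
      filter_upwards [hVopen.mem_nhds hq] with p hp using hG0 p hp
    rw [hHdef, Filter.EventuallyEq.fderiv_eq hev]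
    simp
  have hmemV : ∀ τ, 0 < τ → τ < t + 1 → ∀ x, x ∉ K →
      ((τ, x) : ℝ × (Fin (m+1) → ℝ)) ∈ (Set.Ioo (0:ℝ) (t+1)) ×ˢ (Kᶜ : Set (Fin (m+1) → ℝ)) :=
    fun τ h1 h2 x hx => ⟨⟨h1, h2⟩, hx⟩
  -- integrability helper
  have hint : ∀ f : (Fin (m+1) → ℝ) → ℝ, Continuous f → (∀ x ∉ K, f x = 0) → Integrable f :=
    fun f hc h0 => integrable_of_supp hK hc h0
  -- continuity of slices at time t
  have hGtc : Continuous fun x => G (t, x) := cont_slice hGc ht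
  have hHtc : Continuous fun x => H (t, x) := cont_slice hHc ht
  have hUtc : Continuous fun x => U (t, x) := cont_slice (hC2'.continuousOn) ht
  have hUc : ContinuousOn U (Omg (m+1)) := hC2'.continuousOn
  -- continuity building blocks on Omg
  have hGv : ∀ v : ℝ × (Fin (m+1) → ℝ), ContinuousOn (fun q => G q v) (Omg (m+1)) :=
    fun v => hGc.clm_apply continuousOn_const
  have hHvw : ∀ v w : ℝ × (Fin (m+1) → ℝ), ContinuousOn (fun q => H q v w) (Omg (m+1)) :=
    fun v w => (hHc.clm_apply continuousOn_const).clm_apply continuousOn_const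
  -- E0 : integrand and its time derivative
  set F₀ : ℝ × (Fin (m+1) → ℝ) → ℝ := fun q =>
    (∑ i, G q (0, Pi.single i 1) * G q (0, Pi.single i 1)) + G q (1, 0) * G q (1, 0)
    with hF₀def
  set F₀' : ℝ × (Fin (m+1) → ℝ) → ℝ := fun q =>
    (∑ i, (H q (1, 0) (0, Pi.single i 1) * G q (0, Pi.single i 1)
      + G q (0, Pi.single i 1) * H q (1, 0) (0, Pi.single i 1)))
    + (H q (1, 0) (1, 0) * G q (1, 0) + G q (1, 0) * H q (1, 0) (1, 0)) with hF₀'def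
  have hE0i : HasDerivAt (fun τ => ∫ x, F₀ (τ, x)) (∫ x, F₀' (t, x)) t := by
    apply deriv_under_integral ht hK
    · exact ((continuousOn_finset_sum _ fun i _ => (hGv _).mul (hGv _)).add
        ((hGv _).mul (hGv _)))
    · exact ((continuousOn_finset_sum _ fun i _ =>
        ((hHvw _ _).mul (hGv _)).add ((hGv _).mul (hHvw _ _))).add
        (((hHvw _ _).mul (hGv _)).add ((hGv _).mul (hHvw _ _))))
    · intro τ hτ x
      exact (HasDerivAt.fun_sum fun i _ => (F5 _ τ hτ x).mul (F5 _ τ hτ x)).add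
        ((F5 _ τ hτ x).mul (F5 _ τ hτ x))
    · intro τ hτ1 hτ2 x hx
      simp [hF₀def, hG0 _ (hmemV τ hτ1 hτ2 x hx)]
    · intro τ hτ1 hτ2 x hx
      simp [hF₀'def, hG0 _ (hmemV τ hτ1 hτ2 x hx), hH0 _ (hmemV τ hτ1 hτ2 x hx)]
  have hE0d : HasDerivAt (fun τ => E0 u τ) ((1 / 2) * ∫ x, F₀' (t, x)) t := by
    refine (hE0i.const_mul (1/2 : ℝ)).congr_of_eventuallyEq ?_
    filter_upwards [Ioi_mem_nhds ht] with τ hτ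
    have hτ' : 0 < τ := hτ
    rw [E0]
    congr 1
    refine congrArg _ (funext fun x => ?_)
    simp only [gradSq, F4 τ hτ', F2 τ hτ', hF₀def, pow_two]
  -- E5 : integrand and its time derivative
  set F₅ : ℝ × (Fin (m+1) → ℝ) → ℝ := fun q =>
    U q * G q (1, 0) + ((1 + η) * (U q * U q)) / (2 * (1 + q.1)) with hF₅def
  set F₅' : ℝ × (Fin (m+1) → ℝ) → ℝ := fun q =>
    (G q (1, 0) * G q (1, 0) + U q * H q (1, 0) (1, 0))
    + (((1 + η) * (G q (1, 0) * U q + U q * G q (1, 0))) * (2 * (1 + q.1))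
       - ((1 + η) * (U q * U q)) * (2 * 1)) / (2 * (1 + q.1)) ^ 2 with hF₅'def
  have hden : ∀ τ : ℝ, 0 < τ → 2 * (1 + τ) ≠ 0 := fun τ hτ => by positivity
  have hE5i : HasDerivAt (fun τ => ∫ x, F₅ (τ, x)) (∫ x, F₅' (t, x)) t := by
    apply deriv_under_integral ht hK
    · have hc1 : ContinuousOn (fun q : ℝ × (Fin (m+1) → ℝ) => 2 * (1 + q.1)) (Omg (m+1)) :=
        (continuous_const.mul (continuous_const.add continuous_fst)).continuousOn
      refine (hUc.mul (hGv _)).add ((continuousOn_const.mul (hUc.mul hUc)).div hc1 ?_)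
      intro q hq
      exact hden q.1 (mem_Omg.1 hq)
    · have hc1 : ContinuousOn (fun q : ℝ × (Fin (m+1) → ℝ) => 2 * (1 + q.1)) (Omg (m+1)) :=
        (continuous_const.mul (continuous_const.add continuous_fst)).continuousOn
      have hnum : ContinuousOn (fun q : ℝ × (Fin (m+1) → ℝ) =>
          ((1 + η) * (G q (1, 0) * U q + U q * G q (1, 0))) * (2 * (1 + q.1))
          - ((1 + η) * (U q * U q)) * (2 * 1)) (Omg (m+1)) :=
        ((continuousOn_const.mul (((hGv _).mul hUc).add (hUc.mul (hGv _)))).mul hc1).sub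
          ((continuousOn_const.mul (hUc.mul hUc)).mul continuousOn_const)
      refine (((hGv _).mul (hGv _)).add (hUc.mul (hHvw _ _))).add (hnum.div (hc1.pow 2) ?_)
      intro q hq
      exact pow_ne_zero 2 (hden q.1 (mem_Omg.1 hq))
    · intro τ hτ x
      have hu1 : HasDerivAt (fun s => U (s, x)) (G (τ, x) (1, 0)) τ := F1 τ hτ x
      have hm := hu1.mul (F5 (1, 0) τ hτ x)
      have hnum := (hu1.mul hu1).const_mul ((1:ℝ) + η)
      have hdend : HasDerivAt (fun s : ℝ => 2 * (1 + s)) (2 * 1) τ :=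
        ((hasDerivAt_id τ).const_add 1).const_mul 2
      have hdiv := hnum.div hdend (hden τ hτ)
      exact hm.add hdiv
    · intro τ hτ1 hτ2 x hx
      have h0 : U (τ, x) = 0 := hV0 _ (hmemV τ hτ1 hτ2 x hx)
      simp [hF₅def, h0]
    · intro τ hτ1 hτ2 x hx
      have h0 : U (τ, x) = 0 := hV0 _ (hmemV τ hτ1 hτ2 x hx)
      simp [hF₅'def, h0, hG0 _ (hmemV τ hτ1 hτ2 x hx), hH0 _ (hmemV τ hτ1 hτ2 x hx)]
  have hE5d : HasDerivAt (fun τ => E5 η u τ) (∫ x, F₅' (t, x)) t := by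
    refine hE5i.congr_of_eventuallyEq ?_
    filter_upwards [Ioi_mem_nhds ht] with τ hτ
    have hτ' : 0 < τ := hτ
    rw [E5]
    refine congrArg _ (funext fun x => ?_)
    simp only [F2 τ hτ', hF₅def, pow_two]
    rfl
  -- slice facts at time t
  have htt : t < t + 1 := by linarith
  have hU0t : ∀ x ∉ K, U (t, x) = 0 := fun x hx => hV0 _ (hmemV t ht htt x hx)
  have hG0t : ∀ x ∉ K, G (t, x) = 0 := fun x hx => hG0 _ (hmemV t ht htt x hx)
  have hH0t : ∀ x ∉ K, H (t, x) = 0 := fun x hx => hH0 _ (hmemV t ht htt x hx)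
  have hGt : ∀ v : ℝ × (Fin (m+1) → ℝ), Continuous fun x => G (t, x) v :=
    fun v => hGtc.clm_apply continuous_const
  have hHt : ∀ v w : ℝ × (Fin (m+1) → ℝ), Continuous fun x => H (t, x) v w :=
    fun v w => (hHtc.clm_apply continuous_const).clm_apply continuous_const
  have hSumHc : Continuous fun x => ∑ i, H (t, x) (0, Pi.single i 1) (0, Pi.single i 1) :=
    continuous_finset_sum _ fun i _ => hHt _ _
  -- integrability of the various slices
  have hIGG : ∀ v w : ℝ × (Fin (m+1) → ℝ), Integrable fun x => G (t, x) v * G (t, x) w :=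
    fun v w => hint _ ((hGt v).mul (hGt w)) (fun x hx => by simp [hG0t x hx])
  have hIGH : ∀ v w w' : ℝ × (Fin (m+1) → ℝ),
      Integrable fun x => G (t, x) v * H (t, x) w w' :=
    fun v w w' => hint _ ((hGt v).mul (hHt w w')) (fun x hx => by simp [hG0t x hx])
  have hIUH : ∀ w w' : ℝ × (Fin (m+1) → ℝ),
      Integrable fun x => U (t, x) * H (t, x) w w' :=
    fun w w' => hint _ (hUtc.mul (hHt w w')) (fun x hx => by simp [hU0t x hx])
  have hIUG : ∀ v : ℝ × (Fin (m+1) → ℝ), Integrable fun x => U (t, x) * G (t, x) v :=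
    fun v => hint _ (hUtc.mul (hGt v)) (fun x hx => by simp [hU0t x hx])
  have hIUU : Integrable fun x => U (t, x) * U (t, x) :=
    hint _ (hUtc.mul hUtc) (fun x hx => by simp [hU0t x hx])
  have hIGS : Integrable fun x =>
      G (t, x) (1, 0) * ∑ i, H (t, x) (0, Pi.single i 1) (0, Pi.single i 1) :=
    hint _ ((hGt _).mul hSumHc) (fun x hx => by simp [hG0t x hx])
  have hIUS : Integrable fun x =>
      U (t, x) * ∑ i, H (t, x) (0, Pi.single i 1) (0, Pi.single i 1) :=
    hint _ (hUtc.mul hSumHc) (fun x hx => by simp [hU0t x hx])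
  have hIsumGG : Integrable fun x => ∑ i, G (t, x) (0, Pi.single i 1) * G (t, x) (0, Pi.single i 1) :=
    hint _ (continuous_finset_sum _ fun i _ => (hGt _).mul (hGt _))
      (fun x hx => by simp [hG0t x hx])
  -- abbreviations for the basic integrals
  set AA := ∫ x, U (t, x) * U (t, x) with hAAdef
  set BB := ∫ x, U (t, x) * G (t, x) (1, 0) with hBBdef
  set CC := ∫ x, G (t, x) (1, 0) * G (t, x) (1, 0) with hCCdef
  set DD := ∫ x, ∑ i, G (t, x) (0, Pi.single i 1) * G (t, x) (0, Pi.single i 1) with hDDdef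
  set SS := ∫ x, G (t, x) (1, 0) * ∑ i, H (t, x) (0, Pi.single i 1) (0, Pi.single i 1) with hSSdef
  set SU := ∫ x, U (t, x) * ∑ i, H (t, x) (0, Pi.single i 1) (0, Pi.single i 1) with hSUdef
  -- symmetry of second derivatives at time t
  have hsymm_t : ∀ (x : Fin (m+1) → ℝ) v w, H (t, x) v w = H (t, x) w v :=
    fun x => hsymm (t, x) (mem_Omg.2 ht)
  -- continuity of the CLM-valued maps used in integration by parts
  have hMc : ∀ v : ℝ × (Fin (m+1) → ℝ), Continuous fun x =>
      (ContinuousLinearMap.apply ℝ ℝ v).comp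
        ((H (t, x)).comp (ContinuousLinearMap.inr ℝ ℝ (Fin (m+1) → ℝ))) :=
    fun v => continuous_const.clm_comp (hHtc.clm_comp continuous_const)
  -- integration by parts identities
  have IBPa : ∀ i, (∫ x, (G (t, x) (1, 0) * H (t, x) (0, Pi.single i 1) (0, Pi.single i 1)
      + G (t, x) (0, Pi.single i 1) * H (t, x) (0, Pi.single i 1) (1, 0))) = 0 := by
    intro i
    have hd' : ∀ x, HasFDerivAt (fun y => G (t, y) (1, 0) * G (t, y) (0, Pi.single i 1))
        (G (t, x) (1, 0) • ((ContinuousLinearMap.apply ℝ ℝ ((0:ℝ), Pi.single i (1:ℝ))).comp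
            ((H (t, x)).comp (ContinuousLinearMap.inr ℝ ℝ (Fin (m+1) → ℝ))))
         + G (t, x) (0, Pi.single i 1) • ((ContinuousLinearMap.apply ℝ ℝ ((1:ℝ), (0 : Fin (m+1) → ℝ))).comp
            ((H (t, x)).comp (ContinuousLinearMap.inr ℝ ℝ (Fin (m+1) → ℝ))))) x :=
      fun x => (F8 (1, 0) t ht x).mul (F8 (0, Pi.single i 1) t ht x)
    have hres := integral_pd_eq_zero hd'
      (((hGt _).smul (hMc _)).add ((hGt _).smul (hMc _)))
      hK (fun x hx => by simp [hG0t x hx]) i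
    refine Eq.trans (congrArg _ (funext fun x => ?_)) hres
    simp
  have IBPb : ∀ i, (∫ x, (U (t, x) * H (t, x) (0, Pi.single i 1) (0, Pi.single i 1)
      + G (t, x) (0, Pi.single i 1) * G (t, x) (0, Pi.single i 1))) = 0 := by
    intro i
    have hd' : ∀ x, HasFDerivAt (fun y => U (t, y) * G (t, y) (0, Pi.single i 1))
        (U (t, x) • ((ContinuousLinearMap.apply ℝ ℝ ((0:ℝ), Pi.single i (1:ℝ))).comp
            ((H (t, x)).comp (ContinuousLinearMap.inr ℝ ℝ (Fin (m+1) → ℝ))))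
         + G (t, x) (0, Pi.single i 1) •
            ((G (t, x)).comp (ContinuousLinearMap.inr ℝ ℝ (Fin (m+1) → ℝ)))) x :=
      fun x => (F3 t ht x).mul (F8 (0, Pi.single i 1) t ht x)
    have hres := integral_pd_eq_zero hd'
      ((hUtc.smul (hMc _)).add ((hGt _).smul (hGtc.clm_comp continuous_const)))
      hK (fun x hx => by simp [hU0t x hx]) i
    refine Eq.trans (congrArg _ (funext fun x => ?_)) hres
    simp
  -- consequences of integration by parts
  have hPa : ∀ i, (∫ x, G (t, x) (0, Pi.single i 1) * H (t, x) (1, 0) (0, Pi.single i 1))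
      = - ∫ x, G (t, x) (1, 0) * H (t, x) (0, Pi.single i 1) (0, Pi.single i 1) := by
    intro i
    have h1 := IBPa i
    rw [integral_add (hIGH _ _ _) (hIGH _ _ _)] at h1
    have h2 : (∫ x, G (t, x) (0, Pi.single i 1) * H (t, x) (0, Pi.single i 1) (1, 0))
        = ∫ x, G (t, x) (0, Pi.single i 1) * H (t, x) (1, 0) (0, Pi.single i 1) := by
      refine congrArg _ (funext fun x => ?_)
      rw [hsymm_t x (0, Pi.single i 1) (1, 0)]
    rw [h2] at h1
    linarith
  have hPb : ∀ i, (∫ x, U (t, x) * H (t, x) (0, Pi.single i 1) (0, Pi.single i 1))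
      = - ∫ x, G (t, x) (0, Pi.single i 1) * G (t, x) (0, Pi.single i 1) := by
    intro i
    have h1 := IBPb i
    rw [integral_add (hIUH _ _) (hIGG _ _)] at h1
    linarith
  -- evaluation of ∫ F₀'
  have hSSsum : SS = ∑ i, ∫ x, G (t, x) (1, 0) * H (t, x) (0, Pi.single i 1) (0, Pi.single i 1) := by
    rw [hSSdef]
    rw [show (fun x => G (t, x) (1, 0) * ∑ i, H (t, x) (0, Pi.single i 1) (0, Pi.single i 1))
      = fun x => ∑ i, G (t, x) (1, 0) * H (t, x) (0, Pi.single i 1) (0, Pi.single i 1) from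
        funext fun x => Finset.mul_sum _ _ _]
    exact integral_finset_sum _ fun i _ => hIGH _ _ _
  have hSUsum : SU = -DD := by
    have h1 : SU = ∑ i, ∫ x, U (t, x) * H (t, x) (0, Pi.single i 1) (0, Pi.single i 1) := by
      rw [hSUdef]
      rw [show (fun x => U (t, x) * ∑ i, H (t, x) (0, Pi.single i 1) (0, Pi.single i 1))
        = fun x => ∑ i, U (t, x) * H (t, x) (0, Pi.single i 1) (0, Pi.single i 1) from
          funext fun x => Finset.mul_sum _ _ _]
      exact integral_finset_sum _ fun i _ => hIUH _ _
    have h2 : DD = ∑ i, ∫ x, G (t, x) (0, Pi.single i 1) * G (t, x) (0, Pi.single i 1) := by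
      rw [hDDdef]
      exact integral_finset_sum _ fun i _ => hIGG _ _
    rw [h1, h2, ← Finset.sum_neg_distrib]
    exact Finset.sum_congr rfl fun i _ => hPb i
  -- evaluation of ∫ F₀'
  have hF0val : (∫ x, F₀' (t, x)) = -(4 / (1 + t)) * CC := by
    have hptw : (fun x => F₀' (t, x)) = fun x =>
        (∑ i, 2 * (G (t, x) (0, Pi.single i 1) * H (t, x) (1, 0) (0, Pi.single i 1)))
        + 2 * (G (t, x) (1, 0) * H (t, x) (1, 0) (1, 0)) := by
      funext x
      simp only [hF₀'def]
      congr 1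
      · exact Finset.sum_congr rfl fun i _ => by ring
      · ring
    have hintSum : Integrable (fun x =>
        ∑ i, 2 * (G (t, x) (0, Pi.single i 1) * H (t, x) (1, 0) (0, Pi.single i 1))) :=
      integrable_finset_sum _ fun i _ => ((hIGH _ _ _).const_mul 2)
    rw [hptw, integral_add hintSum ((hIGH _ _ _).const_mul 2),
      integral_finset_sum _ fun i _ => ((hIGH _ _ _).const_mul 2)]
    have e2 : (∑ i, ∫ x, 2 * (G (t, x) (0, Pi.single i 1) * H (t, x) (1, 0) (0, Pi.single i 1)))
        = -2 * SS := by
      rw [hSSsum, Finset.mul_sum]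
      refine Finset.sum_congr rfl fun i _ => ?_
      rw [integral_const_mul, hPa i]
      ring
    have e3 : (∫ x, 2 * (G (t, x) (1, 0) * H (t, x) (1, 0) (1, 0)))
        = 2 * (SS - 2 / (1 + t) * CC) := by
      rw [integral_const_mul]
      congr 1
      have hptw2 : (fun x => G (t, x) (1, 0) * H (t, x) (1, 0) (1, 0)) = fun x =>
          G (t, x) (1, 0) * ∑ i, H (t, x) (0, Pi.single i 1) (0, Pi.single i 1)
          - 2 / (1 + t) * (G (t, x) (1, 0) * G (t, x) (1, 0)) := by
        funext x
        rw [hPDE t ht x]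
        ring
      rw [hptw2, integral_sub hIGS ((hIGG _ _).const_mul _), integral_const_mul,
        ← hSSdef, ← hCCdef]
    rw [e2, e3]
    ring
  -- evaluation of ∫ F₅'
  have hF5val : (∫ x, F₅' (t, x)) = CC + SU - (2 / (1 + t)) * BB
      + ((1 + η) / (1 + t)) * BB - ((1 + η) / (2 * (1 + t) ^ 2)) * AA := by
    have hptw : (fun x => F₅' (t, x)) = fun x =>
        G (t, x) (1, 0) * G (t, x) (1, 0)
        + U (t, x) * ∑ i, H (t, x) (0, Pi.single i 1) (0, Pi.single i 1)
        - (2 / (1 + t)) * (U (t, x) * G (t, x) (1, 0))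
        + ((1 + η) / (1 + t)) * (U (t, x) * G (t, x) (1, 0))
        - ((1 + η) / (2 * (1 + t) ^ 2)) * (U (t, x) * U (t, x)) := by
      funext x
      simp only [hF₅'def]
      rw [hPDE t ht x]
      have h2t : (2 : ℝ) * (1 + t) ≠ 0 := hden t ht
      field_simp
      ring
    have I1 := hIGG ((1:ℝ), (0 : Fin (m+1) → ℝ)) ((1:ℝ), (0 : Fin (m+1) → ℝ))
    have I3 := (hIUG ((1:ℝ), (0 : Fin (m+1) → ℝ))).const_mul (2 / (1 + t))
    have I4 := (hIUG ((1:ℝ), (0 : Fin (m+1) → ℝ))).const_mul ((1 + η) / (1 + t))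
    have I5 := hIUU.const_mul ((1 + η) / (2 * (1 + t) ^ 2))
    have J1 : Integrable (fun x => G (t, x) (1, 0) * G (t, x) (1, 0)
        + U (t, x) * ∑ i, H (t, x) (0, Pi.single i 1) (0, Pi.single i 1)) := I1.add hIUS
    have J2 : Integrable (fun x => G (t, x) (1, 0) * G (t, x) (1, 0)
        + U (t, x) * ∑ i, H (t, x) (0, Pi.single i 1) (0, Pi.single i 1)
        - (2 / (1 + t)) * (U (t, x) * G (t, x) (1, 0))) := J1.sub I3
    have J3 : Integrable (fun x => G (t, x) (1, 0) * G (t, x) (1, 0)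
        + U (t, x) * ∑ i, H (t, x) (0, Pi.single i 1) (0, Pi.single i 1)
        - (2 / (1 + t)) * (U (t, x) * G (t, x) (1, 0))
        + ((1 + η) / (1 + t)) * (U (t, x) * G (t, x) (1, 0))) := J2.add I4
    rw [hptw, integral_sub J3 I5, integral_add J2 I4, integral_sub J1 I3,
      integral_add I1 hIUS, integral_const_mul, integral_const_mul, integral_const_mul,
      ← hAAdef, ← hBBdef, ← hCCdef, ← hSUdef]
  -- values of the energies at time t
  have hE0t : E0 u t = 1 / 2 * (DD + CC) := by
    simp only [E0]
    congr 1
    rw [show (fun x => gradSq (u t) x + tderiv u t x ^ 2) = fun x =>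
        (∑ i, G (t, x) (0, Pi.single i 1) * G (t, x) (0, Pi.single i 1))
        + G (t, x) (1, 0) * G (t, x) (1, 0) from funext fun x => by
      simp only [gradSq, F4 t ht, F2 t ht, pow_two]]
    rw [integral_add hIsumGG (hIGG _ _), ← hDDdef, ← hCCdef]
  have hE5t : E5 η u t = BB + ((1 + η) / (2 * (1 + t))) * AA := by
    simp only [E5]
    rw [show (fun x => u t x * tderiv u t x + (1 + η) * u t x ^ 2 / (2 * (1 + t))) = fun x =>
        U (t, x) * G (t, x) (1, 0) + ((1 + η) / (2 * (1 + t))) * (U (t, x) * U (t, x)) from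
      funext fun x => by
        simp only [hUdef]
        rw [F2 t ht x, pow_two]
        ring]
    rw [integral_add (hIUG _) (hIUU.const_mul _), integral_const_mul, ← hAAdef, ← hBBdef]
  have hAt : (∫ x, (u t x) ^ 2) = AA := by
    rw [hAAdef]
    refine congrArg _ (funext fun x => ?_)
    simp only [hUdef]
    rw [pow_two]
  have hCt : (∫ x, (tderiv u t x) ^ 2) = CC := by
    rw [hCCdef]
    refine congrArg _ (funext fun x => ?_)
    rw [F2 t ht x, pow_two]
  -- assemble the derivative of E6
  have hcoefd : HasDerivAt (fun τ : ℝ => (2 - η) / (2 * (1 + τ)))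
      ((0 * (2 * (1 + t)) - (2 - η) * (2 * 1)) / (2 * (1 + t)) ^ 2) t :=
    (hasDerivAt_const t (2 - η)).div (((hasDerivAt_id t).const_add 1).const_mul 2) (hden t ht)
  have hE6d := hE0d.add (hcoefd.mul hE5d)
  have hfun : (fun τ => E6 η u τ) = fun τ => E0 u τ + ((2 - η) / (2 * (1 + τ))) * E5 η u τ :=
    funext fun τ => rfl
  rw [hfun]
  refine hE6d.congr_deriv ?_
  rw [hF0val, hF5val, hAt, hCt, hSUsum,
    show E6 η u t = E0 u t + ((2 - η) / (2 * (1 + t))) * E5 η u t from rfl, hE0t, hE5t]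
  have h1t' : (1 + t) ≠ 0 := ne_of_gt h1t
  field_simp
  ring
end
end

section
/- Let p ≥ 2 be a real number and let F : ℝ → ℝ be either F(s) = |s|^p or F(s) = |s|^{p−1}s. There exists a constant C > 0 depending only on p such that for all functions u, v : ℝⁿ → ℝ differentiable at a point x ∈ ℝⁿ, the compositions F∘u and F∘v are differentiable at x and ‖∇(F∘u)(x) − ∇(F∘v)(x)‖ ≤ C |u(x)|^{p−1} ‖∇u(x) − ∇v(x)‖ + C ‖∇v(x)‖ ( |u(x)|^{p−2} + |v(x)|^{p−2} ) |u(x) − v(x)|. -/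
open Real Filter

private lemma sq_rpow_half (t r : ℝ) : ((t ^ 2 : ℝ)) ^ (r / 2) = |t| ^ r := by
  have h : (t ^ 2 : ℝ) = |t| ^ ((2 : ℕ) : ℝ) := by
    rw [Real.rpow_natCast, sq_abs]
  rw [h, ← Real.rpow_mul (abs_nonneg t)]
  congr 1
  push_cast
  ring

private lemma abs_rpow_mul_self (s r : ℝ) (h : r + 1 ≠ 0) :
    |s| ^ r * |s| = |s| ^ (r + 1) := by
  rcases eq_or_ne s 0 with rfl | hs
  · simp [Real.zero_rpow h]
  · rw [Real.rpow_add_one (abs_ne_zero.2 hs)]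

private lemma hasDerivAt_abs_rpow_mul (q : ℝ) (hq : 1 ≤ q) (s : ℝ) :
    HasDerivAt (fun t : ℝ => |t| ^ (q - 1) * t) (q * |s| ^ (q - 1)) s := by
  rcases ne_or_eq s 0 with hs | rfl
  · have h1 : HasDerivAt (fun t : ℝ => t ^ 2) (2 * s) s := by
      simpa using hasDerivAt_pow 2 s
    have h3 := h1.rpow_const (p := (q - 1) / 2) (Or.inl (pow_ne_zero 2 hs))
    have h4 := h3.mul (hasDerivAt_id s)
    have h5 := h4.congr_of_eventuallyEq (f₁ := fun t : ℝ => |t| ^ (q - 1) * t)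
      (Filter.Eventually.of_forall fun t => by
        show |t| ^ (q - 1) * t = (t ^ 2) ^ ((q - 1) / 2) * id t
        rw [sq_rpow_half, id])
    convert h5 using 1
    case e'_4 => rfl
    case e'_5 => rfl
    simp only [id_eq]
    have e1 : (q - 1) / 2 - 1 = (q - 3) / 2 := by ring
    rw [e1, sq_rpow_half, sq_rpow_half]
    have h2' : s * s = |s| ^ ((2 : ℕ) : ℝ) := by
      rw [Real.rpow_natCast, sq_abs, sq]
    have key : |s| ^ (q - 3) * (s * s) = |s| ^ (q - 1) := by
      rw [h2', ← Real.rpow_add (abs_pos.2 hs)]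
      congr 1
      push_cast
      ring
    linear_combination (1 - q) * key
  · rcases eq_or_lt_of_le hq with rfl | hq1
    · have hfun : (fun t : ℝ => |t| ^ ((1 : ℝ) - 1) * t) = fun t : ℝ => t := by
        funext t; simp
      rw [hfun]
      have : (1 : ℝ) * |(0 : ℝ)| ^ ((1 : ℝ) - 1) = 1 := by simp
      rw [this]
      exact hasDerivAt_id 0
    · have hval : q * |(0 : ℝ)| ^ (q - 1) = 0 := by
        rw [abs_zero, Real.zero_rpow (by linarith)]; ring
      rw [hval, hasDerivAt_iff_tendsto_slope]
      have hcont : Tendsto (fun t : ℝ => |t| ^ (q - 1)) (nhds 0) (nhds 0) := by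
        have h1 : ContinuousAt (fun y : ℝ => y ^ (q - 1)) (|(0 : ℝ)|) := by
          simpa using Real.continuousAt_rpow_const 0 (q - 1) (Or.inr (by linarith))
        have h2 : ContinuousAt (fun t : ℝ => |t| ^ (q - 1)) 0 :=
          h1.comp (continuous_abs.continuousAt)
        have h3 := h2.tendsto
        simpa [Real.zero_rpow (show q - 1 ≠ 0 by linarith)] using h3
      refine Tendsto.congr' ?_ (hcont.mono_left nhdsWithin_le_nhds)
      filter_upwards [self_mem_nhdsWithin] with t ht
      have ht' : t ≠ 0 := ht
      rw [slope_def_field, eq_div_iff (sub_ne_zero.2 ht')]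
      simp

private lemma abs_le_max_of_mem_uIcc {a b t : ℝ} (ht : t ∈ Set.uIcc b a) :
    |t| ≤ max |a| |b| := by
  rw [Set.mem_uIcc] at ht
  have h1 := le_abs_self a; have h2 := le_abs_self b
  have h3 := neg_abs_le a; have h4 := neg_abs_le b
  have h5 := le_max_left |a| |b|; have h6 := le_max_right |a| |b|
  rcases ht with ⟨ha, hb⟩ | ⟨ha, hb⟩ <;> rw [abs_le] <;> constructor <;> linarith

private lemma max_rpow_le (a b r : ℝ) (hr : 0 ≤ r) :
    (max |a| |b|) ^ r ≤ |a| ^ r + |b| ^ r := by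
  rcases max_cases |a| |b| with ⟨h, _⟩ | ⟨h, _⟩ <;> rw [h]
  · nlinarith [Real.rpow_nonneg (abs_nonneg b) r]
  · nlinarith [Real.rpow_nonneg (abs_nonneg a) r]

private lemma diff_bound (q : ℝ) (hq : 1 ≤ q) (a b : ℝ) :
    |(|a| ^ (q - 1) * a) - (|b| ^ (q - 1) * b)|
      ≤ q * (|a| ^ (q - 1) + |b| ^ (q - 1)) * |a - b| := by
  set C := q * (|a| ^ (q - 1) + |b| ^ (q - 1)) with hC
  have hmvt := Convex.norm_image_sub_le_of_norm_hasDerivWithin_le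
    (f := fun t : ℝ => |t| ^ (q - 1) * t) (f' := fun t : ℝ => q * |t| ^ (q - 1))
    (s := Set.uIcc b a) (C := C)
    (fun t _ => (hasDerivAt_abs_rpow_mul q hq t).hasDerivWithinAt)
    (fun t ht => by
      rw [Real.norm_eq_abs, abs_mul, abs_of_nonneg (by linarith : (0:ℝ) ≤ q),
        abs_of_nonneg (Real.rpow_nonneg (abs_nonneg t) _)]
      have h1 : |t| ^ (q - 1) ≤ (max |a| |b|) ^ (q - 1) :=
        Real.rpow_le_rpow (abs_nonneg t) (abs_le_max_of_mem_uIcc ht) (by linarith)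
      have h2 := max_rpow_le a b (q - 1) (by linarith)
      rw [hC]
      nlinarith)
    (convex_uIcc b a) Set.left_mem_uIcc Set.right_mem_uIcc
  simpa [Real.norm_eq_abs] using hmvt

private lemma rpow_diff_bound (r : ℝ) (hr : 1 ≤ r) (a b : ℝ) :
    abs (|a| ^ r - |b| ^ r) ≤ r * (|a| ^ (r - 1) + |b| ^ (r - 1)) * |a - b| := by
  set C := r * (|a| ^ (r - 1) + |b| ^ (r - 1)) with hC
  have hC0 : 0 ≤ C := by
    have := Real.rpow_nonneg (abs_nonneg a) (r - 1)
    have := Real.rpow_nonneg (abs_nonneg b) (r - 1)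
    positivity
  have hmvt := Convex.norm_image_sub_le_of_norm_hasDerivWithin_le
    (f := fun t : ℝ => t ^ r) (f' := fun t : ℝ => r * t ^ (r - 1))
    (s := Set.uIcc |b| |a|) (C := C)
    (fun t _ => (Real.hasDerivAt_rpow_const (Or.inr hr)).hasDerivWithinAt)
    (fun t ht => by
      have ht0 : 0 ≤ t := by
        rw [Set.mem_uIcc] at ht
        rcases ht with ⟨h1, _⟩ | ⟨h1, _⟩ <;>
          [exact le_trans (abs_nonneg b) h1; exact le_trans (abs_nonneg a) h1]
      have htabs : |t| = t := abs_of_nonneg ht0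
      have h1 : t ^ (r - 1) ≤ (max |a| |b|) ^ (r - 1) := by
        refine Real.rpow_le_rpow ht0 ?_ (by linarith)
        have := abs_le_max_of_mem_uIcc (a := |a|) (b := |b|) ht
        simpa [abs_abs, htabs] using this
      have h2 := max_rpow_le a b (r - 1) (by linarith)
      rw [Real.norm_eq_abs, abs_mul, abs_of_nonneg (by linarith : (0:ℝ) ≤ r),
        abs_of_nonneg (Real.rpow_nonneg ht0 _), hC]
      nlinarith)
    (convex_uIcc _ _) Set.left_mem_uIcc Set.right_mem_uIcc
  rw [Real.norm_eq_abs, Real.norm_eq_abs] at hmvt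
  calc abs (|a| ^ r - |b| ^ r) ≤ C * abs (|a| - |b|) := hmvt
    _ ≤ C * |a - b| := by
        exact mul_le_mul_of_nonneg_left (abs_abs_sub_abs_le_abs_sub a b) hC0
    _ = r * (|a| ^ (r - 1) + |b| ^ (r - 1)) * |a - b| := by rw [hC]

theorem statement14 (p : ℝ) (hp : 2 ≤ p) (F : ℝ → ℝ)
    (hF : (∀ s : ℝ, F s = |s| ^ p) ∨ (∀ s : ℝ, F s = |s| ^ (p - 1) * s)) :
    ∃ C : ℝ, 0 < C ∧
      ∀ (n : ℕ) (u v : EuclideanSpace ℝ (Fin n) → ℝ) (x : EuclideanSpace ℝ (Fin n)),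
        DifferentiableAt ℝ u x → DifferentiableAt ℝ v x →
        DifferentiableAt ℝ (F ∘ u) x ∧ DifferentiableAt ℝ (F ∘ v) x ∧
        ‖gradient (F ∘ u) x - gradient (F ∘ v) x‖
          ≤ C * |u x| ^ (p - 1) * ‖gradient u x - gradient v x‖
            + C * ‖gradient v x‖ * (|u x| ^ (p - 2) + |v x| ^ (p - 2)) * |u x - v x| := by
  obtain ⟨F', hd, hb, hdiff⟩ : ∃ F' : ℝ → ℝ, (∀ s, HasDerivAt F (F' s) s) ∧
      (∀ s, |F' s| ≤ p * |s| ^ (p - 1)) ∧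
      (∀ a b : ℝ, |F' a - F' b| ≤ p * (p - 1) * (|a| ^ (p - 2) + |b| ^ (p - 2)) * |a - b|) := by
    rcases hF with h | h
    · refine ⟨fun s => p * |s| ^ (p - 2) * s, fun s => ?_, fun s => ?_, fun a b => ?_⟩
      · exact (hasDerivAt_abs_rpow s (by linarith : (1:ℝ) < p)).congr_of_eventuallyEq
          (Filter.Eventually.of_forall fun t => h t)
      · rw [abs_mul, abs_mul, abs_of_nonneg (by linarith : (0:ℝ) ≤ p),
          abs_of_nonneg (Real.rpow_nonneg (abs_nonneg s) _),
          mul_assoc, abs_rpow_mul_self s (p - 2) (by intro hc; linarith)]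
        rw [show p - 2 + 1 = p - 1 by ring]
      · have hd2 := diff_bound (p - 1) (by linarith) a b
        have e : p - 1 - 1 = p - 2 := by ring
        rw [e] at hd2
        have : p * |a| ^ (p - 2) * a - p * |b| ^ (p - 2) * b
            = p * ((|a| ^ (p - 2) * a) - (|b| ^ (p - 2) * b)) := by ring
        rw [this, abs_mul, abs_of_nonneg (by linarith : (0:ℝ) ≤ p)]
        calc p * |(|a| ^ (p - 2) * a) - (|b| ^ (p - 2) * b)|
            ≤ p * ((p - 1) * (|a| ^ (p - 2) + |b| ^ (p - 2)) * |a - b|) :=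
              mul_le_mul_of_nonneg_left hd2 (by linarith)
          _ = p * (p - 1) * (|a| ^ (p - 2) + |b| ^ (p - 2)) * |a - b| := by ring
    · refine ⟨fun s => p * |s| ^ (p - 1), fun s => ?_, fun s => ?_, fun a b => ?_⟩
      · exact (hasDerivAt_abs_rpow_mul p (by linarith) s).congr_of_eventuallyEq
          (Filter.Eventually.of_forall fun t => h t)
      · rw [abs_mul, abs_of_nonneg (by linarith : (0:ℝ) ≤ p),
          abs_of_nonneg (Real.rpow_nonneg (abs_nonneg s) _)]
      · have hd2 := rpow_diff_bound (p - 1) (by linarith) a b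
        have e : p - 1 - 1 = p - 2 := by ring
        rw [e] at hd2
        have : p * |a| ^ (p - 1) - p * |b| ^ (p - 1)
            = p * (|a| ^ (p - 1) - |b| ^ (p - 1)) := by ring
        rw [this, abs_mul, abs_of_nonneg (by linarith : (0:ℝ) ≤ p)]
        calc p * abs (|a| ^ (p - 1) - |b| ^ (p - 1))
            ≤ p * ((p - 1) * (|a| ^ (p - 2) + |b| ^ (p - 2)) * |a - b|) :=
              mul_le_mul_of_nonneg_left hd2 (by linarith)
          _ = p * (p - 1) * (|a| ^ (p - 2) + |b| ^ (p - 2)) * |a - b| := by ring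
  refine ⟨p ^ 2, by positivity, ?_⟩
  intro n u v x hu hv
  have hgu : HasGradientAt u (gradient u x) x := hu.hasGradientAt
  have hgv : HasGradientAt v (gradient v x) x := hv.hasGradientAt
  have hcu : HasGradientAt (F ∘ u) (F' (u x) • gradient u x) x := by
    rw [hasGradientAt_iff_hasFDerivAt] at hgu ⊢
    have h := (hd (u x)).comp_hasFDerivAt x hgu
    simpa [map_smul] using h
  have hcv : HasGradientAt (F ∘ v) (F' (v x) • gradient v x) x := by
    rw [hasGradientAt_iff_hasFDerivAt] at hgv ⊢
    have h := (hd (v x)).comp_hasFDerivAt x hgv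
    simpa [map_smul] using h
  refine ⟨hcu.differentiableAt, hcv.differentiableAt, ?_⟩
  rw [hcu.gradient, hcv.gradient]
  set gu := gradient u x
  set gv := gradient v x
  have hsplit : F' (u x) • gu - F' (v x) • gv
      = F' (u x) • (gu - gv) + (F' (u x) - F' (v x)) • gv := by
    rw [smul_sub, sub_smul]; abel
  rw [hsplit]
  have hA : 0 ≤ |u x| ^ (p - 1) := Real.rpow_nonneg (abs_nonneg _) _
  have hS : 0 ≤ |u x| ^ (p - 2) + |v x| ^ (p - 2) :=
    add_nonneg (Real.rpow_nonneg (abs_nonneg _) _) (Real.rpow_nonneg (abs_nonneg _) _)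
  calc ‖F' (u x) • (gu - gv) + (F' (u x) - F' (v x)) • gv‖
      ≤ ‖F' (u x) • (gu - gv)‖ + ‖(F' (u x) - F' (v x)) • gv‖ := norm_add_le _ _
    _ = |F' (u x)| * ‖gu - gv‖ + |F' (u x) - F' (v x)| * ‖gv‖ := by
        rw [norm_smul, norm_smul, Real.norm_eq_abs, Real.norm_eq_abs]
    _ ≤ (p ^ 2 * |u x| ^ (p - 1)) * ‖gu - gv‖
        + (p ^ 2 * (|u x| ^ (p - 2) + |v x| ^ (p - 2)) * |u x - v x|) * ‖gv‖ := by
        refine add_le_add (mul_le_mul_of_nonneg_right ?_ (norm_nonneg _))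
          (mul_le_mul_of_nonneg_right ?_ (norm_nonneg _))
        · have h1 := hb (u x)
          nlinarith [mul_nonneg (mul_nonneg (by linarith : (0:ℝ) ≤ p)
            (by linarith : (0:ℝ) ≤ p - 1)) hA]
        · have h1 := hdiff (u x) (v x)
          have h2 : 0 ≤ (|u x| ^ (p - 2) + |v x| ^ (p - 2)) * |u x - v x| :=
            mul_nonneg hS (abs_nonneg _)
          nlinarith [mul_nonneg (by linarith : (0:ℝ) ≤ p) h2]
    _ = p ^ 2 * |u x| ^ (p - 1) * ‖gu - gv‖
        + p ^ 2 * ‖gv‖ * (|u x| ^ (p - 2) + |v x| ^ (p - 2)) * |u x - v x| := by ring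
end
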